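/- arXiv:1405.1619 — 2 statements merged into one kernel-verified Lean document; each statement's English description precedes it below -/
import Mathlib

section
/- Let G be an inverse semigroup, H' ⊆ G a finite sub-inverse semigroup, and A a G-algebra. (a) For all s ∈ G and h ∈ G_H with s*·h ∈ G_H, one has s s*·h h* = h h* (i.e., s s* ≥ h h*) in 𝔽(G,A). (b) If moreover g ∈ G_H satisfies g*·s*·h ∈ H, then g g* = (s* h)(s* h)* and s*·h ≡ g. -/
/-! Common setup: inverse semigroups, G-algebras, and the universal *-algebra 𝔽(G,A). -/

noncomputable section

/-- An inverse semigroup: a semigroup in which every element `g` has a unique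
generalized inverse, denoted `star g`. -/
class InverseSemigroup (G : Type*) extends Semigroup G, Star G where
  mul_star_mul_self : ∀ g : G, g * star g * g = g
  star_mul_self_mul_star : ∀ g : G, star g * g * star g = star g
  star_unique : ∀ g h : G, g * h * g = g → h * g * h = h → h = star g

namespace Green

/-! ### The free complex *-algebra on a set of generators

The free complex *-algebra on a set `Y` is realized as the monoid algebra of the free
monoid on the letters `Y × Bool` (a generator together with a formal star flag); its star
operation conjugates coefficients, reverses words and flips the star flags. -/

/-- The free complex *-algebra on the set `Y`. -/
abbrev FreeStar (Y : Type*) := MonoidAlgebra ℂ (FreeMonoid (Y × Bool))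

namespace FreeStar

variable {Y : Type*}

/-- Star of a word: reverse it and flip all star flags. -/
def wordStar (w : FreeMonoid (Y × Bool)) : FreeMonoid (Y × Bool) :=
  FreeMonoid.ofList (((FreeMonoid.toList w).map fun x => (x.1, !x.2)).reverse)

lemma wordStar_mul (v w : FreeMonoid (Y × Bool)) :
    wordStar (v * w) = wordStar w * wordStar v := by
  simp [wordStar, FreeMonoid.toList_mul]

lemma wordStar_wordStar (w : FreeMonoid (Y × Bool)) : wordStar (wordStar w) = w := by
  simp [wordStar, List.map_reverse, List.map_map, Function.comp_def]

/-- The star operation on the free complex *-algebra, as an additive map. -/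
def starAux : FreeStar Y →+ FreeStar Y :=
  (MonoidAlgebra.coeffAddEquiv.symm.toAddMonoidHom.comp
    ((Finsupp.mapDomain.addMonoidHom wordStar).comp
      (Finsupp.mapRange.addMonoidHom (starRingEnd ℂ).toAddMonoidHom))).comp
    MonoidAlgebra.coeffAddEquiv.toAddMonoidHom

lemma starAux_apply (f : FreeStar Y) :
    starAux f = MonoidAlgebra.ofCoeff
      (Finsupp.mapDomain wordStar (Finsupp.mapRange (starRingEnd ℂ) (map_zero _) f.coeff)) :=
  rfl

lemma starAux_single (w : FreeMonoid (Y × Bool)) (c : ℂ) :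
    starAux (MonoidAlgebra.single w c) = MonoidAlgebra.single (wordStar w) (starRingEnd ℂ c) := by
  rw [starAux_apply]
  simp only [MonoidAlgebra.single, Finsupp.mapRange_single, Finsupp.mapDomain_single,
    MonoidAlgebra.coeff_ofCoeff]

instance instStarRing : StarRing (FreeStar Y) where
  star := starAux
  star_involutive := by
    intro f
    induction f using MonoidAlgebra.induction_linear with
    | zero => simp
    | add f g hf hg => simp_all [map_add]
    | single w c => simp [starAux_single, wordStar_wordStar, starRingEnd_self_apply]
  star_mul := by
    intro f g
    show starAux (f * g) = starAux g * starAux f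
    induction f using MonoidAlgebra.induction_linear with
    | zero => simp
    | add f f' hf hf' => simp [mul_add, add_mul, map_add, hf, hf']
    | single w c =>
      induction g using MonoidAlgebra.induction_linear with
      | zero => simp
      | add g g' hg hg' => simp [mul_add, add_mul, map_add, hg, hg']
      | single v d =>
        simp only [MonoidAlgebra.single_mul_single, starAux_single, wordStar_mul, map_mul]
        rw [mul_comm]
  star_add := map_add _

end FreeStar

section GAlgebra

variable {G : Type*} [InverseSemigroup G]
variable {A : Type*} [NonUnitalNormedRing A] [StarRing A] [CStarRing A] [NormedSpace ℂ A]
  [IsScalarTower ℂ A A] [SMulCommClass ℂ A A] [StarModule ℂ A] [CompleteSpace A]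

/-- `α` is an action of the inverse semigroup `G` on the C*-algebra `A` making it a
`G`-algebra: a semigroup homomorphism `G → End(A)` into the *-endomorphisms of `A` such
that `g g*(a)·b = a·g g*(b)` for all `a b : A` and `g : G`. -/
structure IsGAlgebra (α : G → A →⋆ₙₐ[ℂ] A) : Prop where
  map_mul : ∀ g h : G, α (g * h) = (α g).comp (α h)
  central : ∀ (g : G) (a b : A), α (g * star g) a * b = a * α (g * star g) b

variable (α : G → A →⋆ₙₐ[ℂ] A)

/-- The generator of the free *-algebra corresponding to `a ∈ A`. -/
def genA (a : A) : FreeStar (A ⊕ G) := MonoidAlgebra.single (FreeMonoid.of (Sum.inl a, false)) 1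

/-- The generator of the free *-algebra corresponding to `g ∈ G`. -/
def genG (g : G) : FreeStar (A ⊕ G) := MonoidAlgebra.single (FreeMonoid.of (Sum.inr g, false)) 1

/-- The defining relations of `𝔽(G,A)`: the *-algebra relations of `A` are respected, the
multiplication and involution of `G` are respected, and `g(a)·g g* = g·a·g*`,
`[g g*, a] = 0` hold; the relation is moreover closed under `star`, so that the ideal
generated by it is a two-sided *-ideal. -/
inductive Rel : FreeStar (A ⊕ G) → FreeStar (A ⊕ G) → Prop
  | add_A (a b : A) : Rel (genA (G := G) (a + b)) (genA a + genA b)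
  | smul_A (c : ℂ) (a : A) : Rel (genA (G := G) (c • a)) (c • genA a)
  | mul_A (a b : A) : Rel (genA (G := G) (a * b)) (genA a * genA b)
  | star_A (a : A) : Rel (genA (G := G) (star a)) (star (genA a))
  | mul_G (g h : G) : Rel (genG (A := A) (g * h)) (genG g * genG h)
  | star_G (g : G) : Rel (genG (A := A) (star g)) (star (genG g))
  | act (g : G) (a : A) :
      Rel (genA (α g a) * genG g * genG (star g)) (genG g * genA a * genG (star g))
  | comm (g : G) (a : A) :
      Rel (genG g * genG (star g) * genA a) (genA a * genG g * genG (star g))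
  | star_cl {x y} : Rel x y → Rel (star x) (star y)

/-- The universal *-algebra `𝔽(G,A)`: the quotient of the free complex *-algebra on the
set `A ⊔ G` by the two-sided *-ideal generated by the defining relations. -/
abbrev F := RingQuot (Rel α)

instance : StarRing (F α) := RingQuot.starRing _ (fun _ _ h => Rel.star_cl h)

/-- The canonical copy of `a ∈ A` inside `𝔽(G,A)`. -/
def ιA (a : A) : F α := RingQuot.mkAlgHom ℂ (Rel α) (genA a)

/-- The canonical copy of `g ∈ G` inside `𝔽(G,A)`. -/
def ιG (g : G) : F α := RingQuot.mkAlgHom ℂ (Rel α) (genG g)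

/-- The element `e₀(1-e₁)⋯(1-eₙ)` of `𝔽(G,A)` (product expanded multiplicatively),
given `e₀` and the list `[e₁, …, eₙ]`. -/
def elemP (e₀ : G) (l : List G) : F α :=
  l.foldl (fun p e => p - p * ιG α e) (ιG α e₀)

/-- The element `g·e₀(1-e₁)⋯(1-eₙ)` of `𝔽(G,A)`. -/
def elemGE (g e₀ : G) (l : List G) : F α := ιG α g * elemP α e₀ l

/-- The set `E(G)` of projections `e₀(1-e₁)⋯(1-eₙ)` in `𝔽(G,A)`, with `e₀, …, eₙ`
idempotents of `G`. -/
def EG : Set (F α) :=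
  {x | ∃ (e₀ : G) (l : List G), e₀ * e₀ = e₀ ∧ (∀ e ∈ l, e * e = e) ∧ x = elemP α e₀ l}

/-- The inverse semigroup `G_E = {g·p | g ∈ G, p ∈ E(G)}` inside `𝔽(G,A)`. -/
def GE : Set (F α) :=
  {x | ∃ (g e₀ : G) (l : List G),
    e₀ * e₀ = e₀ ∧ (∀ e ∈ l, e * e = e) ∧ x = elemGE α g e₀ l}

/-- The extension of the `G`-action along a list: `(id - α e₁)∘⋯∘(id - α eₙ)`. -/
def actL : List G → A → A
  | [] => id
  | e :: l => fun a => actL l a - α e (actL l a)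

/-- The extension of the `G`-action to `E(G)`:
`α_{e₀(1-e₁)⋯(1-eₙ)} = α_{e₀}∘(id - α_{e₁})∘⋯∘(id - α_{eₙ})`. -/
def actP (e₀ : G) (l : List G) : A → A := fun a => α e₀ (actL α l a)

/-- The extension of the `G`-action to `G_E`: `α_{g·p} = α_g ∘ α_p`. -/
def actGE (g e₀ : G) (l : List G) : A → A := fun a => α g (actP α e₀ l a)

/-- The action of `k* = (g·e₀(1-e₁)⋯(1-eₙ))* = g*·(g e₀ g*)(1 - g e₁ g*)⋯(1 - g eₙ g*)`,
for `k = g·e₀(1-e₁)⋯(1-eₙ) ∈ G_E`. -/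
def actStar (g e₀ : G) (l : List G) : A → A :=
  fun a => α (star g) (actP α (g * e₀ * star g) (l.map fun e => g * e * star g) a)

/-- The subalgebra `A_{k k*} = α_{k k*}(A) = (α_k ∘ α_{k*})(A)`,
for `k = g·e₀(1-e₁)⋯(1-eₙ) ∈ G_E`. -/
def carrier (g e₀ : G) (l : List G) : Set A :=
  Set.range fun a => actGE α g e₀ l (actStar α g e₀ l a)

/-- `S` is a sub-inverse semigroup of `G`: a subset closed under multiplication and
involution. -/
structure IsSubInvSemigroup (S : Set G) : Prop where
  mul_mem : ∀ {a b : G}, a ∈ S → b ∈ S → a * b ∈ S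
  star_mem : ∀ {a : G}, a ∈ S → star a ∈ S

variable (S : Set G)

/-- The set `E(H')` of projections `e₀(1-e₁)⋯(1-eₙ)` with `e₀, …, eₙ` idempotents of
`H' = S`. -/
def EH : Set (F α) :=
  {x | ∃ (e₀ : G) (l : List G), (e₀ ∈ S ∧ e₀ * e₀ = e₀) ∧ (∀ e ∈ l, e ∈ S ∧ e * e = e) ∧
    x = elemP α e₀ l}

/-- `H⁽⁰⁾`: the set of nonzero minimal projections of `E(H')`
(where `q ≤ p` means `q p = q`). -/
def H0 : Set (F α) :=
  {p | p ∈ EH α S ∧ p ≠ 0 ∧ ∀ q ∈ EH α S, q ≠ 0 → q * p = q → q = p}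

/-- The groupoid `H = {t·e | t ∈ H', e ∈ H⁽⁰⁾} \ {0}` associated to `H'`. -/
def Hgpd : Set (F α) :=
  {x | x ≠ 0 ∧ ∃ t ∈ S, ∃ e ∈ H0 α S, x = ιG α t * e}

/-- `G_H = {g·e | g ∈ G, e ∈ H⁽⁰⁾, g* g ≥ e} \ {0}`. -/
def GH : Set (F α) :=
  {x | x ≠ 0 ∧ ∃ (g : G), ∃ e ∈ H0 α S, x = ιG α g * e ∧ e * ιG α (star g * g) = e}

/-- The relation `≡` on `G_H`: `g ≡ h` iff `g t = h` for some `t ∈ H`. -/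
def equivH (x y : F α) : Prop := ∃ t ∈ Hgpd α S, x * t = y

end GAlgebra

/-- For an assertion `P`, the scalar `[P]` which is `1` if `P` is true and `0` if `P`
is false. -/
def ind (P : Prop) : ℂ := @ite _ P (Classical.propDecidable P) 1 0

end Green
namespace Green
namespace Aux

section ISG
variable {G : Type*} [InverseSemigroup G]

lemma mss (g : G) : g * star g * g = g := InverseSemigroup.mul_star_mul_self g
lemma sms (g : G) : star g * g * star g = star g := InverseSemigroup.star_mul_self_mul_star g

lemma star_star' (g : G) : star (star g) = g :=
  (InverseSemigroup.star_unique (star g) g (sms g) (mss g)).symm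

lemma star_idem {e : G} (he : e * e = e) : star e = e :=
  (InverseSemigroup.star_unique e e (by rw [he, he]) (by rw [he, he])).symm

lemma ssg (g : G) : g * (star g * g) = g := by rw [← mul_assoc]; exact mss g
lemma gss (g : G) : star g * (g * star g) = star g := by rw [← mul_assoc]; exact sms g
lemma idem_sg (g : G) : (star g * g) * (star g * g) = star g * g := by
  rw [mul_assoc, ssg]
lemma idem_gs (g : G) : (g * star g) * (g * star g) = g * star g := by
  rw [mul_assoc, gss]

lemma mul_idem_of_idem {e f : G} (he : e * e = e) (hf : f * f = f) :
    (e * f) * (e * f) = e * f := by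
  have he2 : ∀ y : G, e * (e * y) = e * y := fun y => by rw [← mul_assoc, he]
  have hf2 : ∀ y : G, f * (f * y) = f * y := fun y => by rw [← mul_assoc, hf]
  have hx1 : (e*f) * star (e*f) * (e*f) = e*f := mss (e*f)
  have hx2 : star (e*f) * (e*f) * star (e*f) = star (e*f) := sms (e*f)
  have hx1r : e * (f * (star (e*f) * (e * f))) = e * f := by
    simpa only [mul_assoc] using hx1
  have hx2r : star (e*f) * (e * (f * star (e*f))) = star (e*f) := by
    simpa only [mul_assoc] using hx2
  have hx2e : star (e*f) * (e * (f * (star (e*f) * e))) = star (e*f) * e := by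
    have := congrArg (· * e) hx2r
    simpa only [mul_assoc] using this
  have A : (e*f) * (f * star (e*f) * e) * (e*f) = e*f := by
    simp only [mul_assoc, hf2, he2]
    exact hx1r
  have B : (f * star (e*f) * e) * (e*f) * (f * star (e*f) * e) = f * star (e*f) * e := by
    simp only [mul_assoc, hf2, he2]
    rw [hx2e]
  have claim1 : f * star (e*f) * e = star (e*f) :=
    InverseSemigroup.star_unique (e*f) (f * star (e*f) * e) A B
  have hxx : star (e*f) * star (e*f) = star (e*f) := by
    conv_lhs => rw [← claim1]
    simp only [mul_assoc, hf2, he2]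
    calc f * (star (e*f) * (e * (f * (star (e*f) * e))))
        = f * (star (e*f) * e) := by rw [hx2e]
      _ = star (e*f) := by rw [← mul_assoc]; exact claim1
  have hef : e * f = star (e*f) := (star_star' (e*f)).symm.trans (star_idem hxx)
  rw [hef]; exact hxx

lemma idem_comm {e f : G} (he : e * e = e) (hf : f * f = f) : e * f = f * e := by
  have he2 : ∀ y : G, e * (e * y) = e * y := fun y => by rw [← mul_assoc, he]
  have hf2 : ∀ y : G, f * (f * y) = f * y := fun y => by rw [← mul_assoc, hf]
  have hef : (e * f) * (e * f) = e * f := mul_idem_of_idem he hf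
  have hfe : (f * e) * (f * e) = f * e := mul_idem_of_idem hf he
  have A2 : (e*f) * (f*e) * (e*f) = e*f := by
    simp only [mul_assoc, hf2, he2]
    calc e * (f * (e * f)) = (e * f) * (e * f) := by simp only [mul_assoc]
      _ = e * f := hef
  have B2 : (f*e) * (e*f) * (f*e) = f*e := by
    simp only [mul_assoc, hf2, he2]
    calc f * (e * (f * e)) = (f * e) * (f * e) := by simp only [mul_assoc]
      _ = f * e := hfe
  have h1 : f * e = star (e * f) := InverseSemigroup.star_unique (e*f) (f*e) A2 B2
  rw [h1, star_idem hef]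

lemma star_mul' (g h : G) : star (g * h) = star h * star g := by
  have hc : (h * star h) * (star g * g) = (star g * g) * (h * star h) :=
    idem_comm (idem_gs h) (idem_sg g)
  have A : (g*h) * (star h * star g) * (g*h) = g*h := by
    calc (g*h) * (star h * star g) * (g*h)
        = g*((h*star h)*(star g*g)*h) := by simp only [mul_assoc]
      _ = g*((star g*g)*(h*star h)*h) := by rw [hc]
      _ = (g*(star g*g))*((h*star h)*h) := by simp only [mul_assoc]
      _ = g*h := by rw [ssg, mss]
  have B : (star h * star g) * (g*h) * (star h * star g) = star h * star g := by
    calc (star h * star g) * (g*h) * (star h * star g)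
        = star h*((star g*g)*(h*star h)*star g) := by simp only [mul_assoc]
      _ = star h*((h*star h)*(star g*g)*star g) := by rw [← hc]
      _ = (star h*(h*star h))*((star g*g)*star g) := by simp only [mul_assoc]
      _ = star h * star g := by rw [gss, sms]
  exact (InverseSemigroup.star_unique (g*h) (star h * star g) A B).symm

lemma conj_idem (g : G) {e : G} (he : e * e = e) :
    (g * e * star g) * (g * e * star g) = g * e * star g := by
  have h1 : e * (star g * g) = (star g * g) * e := idem_comm he (idem_sg g)
  calc (g * e * star g) * (g * e * star g)
      = g * (e * (star g * g) * (e * star g)) := by simp only [mul_assoc]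
    _ = g * ((star g * g) * e * (e * star g)) := by rw [h1]
    _ = (g * (star g * g)) * ((e * e) * star g) := by simp only [mul_assoc]
    _ = g * (e * star g) := by rw [ssg, he]
    _ = g * e * star g := by rw [← mul_assoc]

lemma conj_absorb (g : G) {e : G} (he : e * e = e) : g * e * star g * g = g * e := by
  have h1 : e * (star g * g) = (star g * g) * e := idem_comm he (idem_sg g)
  calc g * e * star g * g = g * (e * (star g * g)) := by simp only [mul_assoc]
    _ = g * ((star g * g) * e) := by rw [h1]
    _ = (g * (star g * g)) * e := by simp only [mul_assoc]
    _ = g * e := by rw [ssg]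

end ISG
end Aux
end Green
namespace Green
namespace Aux

section Falg
variable {G : Type*} [InverseSemigroup G]
variable {A : Type*} [NonUnitalNormedRing A] [StarRing A] [CStarRing A] [NormedSpace ℂ A]
  [IsScalarTower ℂ A A] [SMulCommClass ℂ A A] [StarModule ℂ A] [CompleteSpace A]
variable (α : G → A →⋆ₙₐ[ℂ] A)

lemma mkAlgHom_star (x : FreeStar (A ⊕ G)) :
    RingQuot.mkAlgHom ℂ (Rel α) (star x) = star (RingQuot.mkAlgHom ℂ (Rel α) x) := by
  have h : ∀ y : FreeStar (A ⊕ G),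
      RingQuot.mkAlgHom ℂ (Rel α) y = RingQuot.mkRingHom (Rel α) y := by
    intro y
    rw [← RingQuot.mkAlgHom_coe ℂ (Rel α)]
    rfl
  rw [h, h, RingQuot.mkRingHom_def]
  exact rfl

lemma ιG_mul (g h : G) : ιG α (g * h) = ιG α g * ιG α h := by
  unfold ιG
  rw [RingQuot.mkAlgHom_rel ℂ (Rel.mul_G g h), map_mul]

lemma ιG_star (g : G) : ιG α (star g) = star (ιG α g) := by
  unfold ιG
  rw [RingQuot.mkAlgHom_rel ℂ (Rel.star_G g), mkAlgHom_star]

end Falg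
end Aux
end Green
namespace Green
namespace Aux
set_option linter.unusedSectionVars false

section Pl
variable {G : Type*} [InverseSemigroup G]
variable {A : Type*} [NonUnitalNormedRing A] [StarRing A] [CStarRing A] [NormedSpace ℂ A]
  [IsScalarTower ℂ A A] [SMulCommClass ℂ A A] [StarModule ℂ A] [CompleteSpace A]
variable (α : G → A →⋆ₙₐ[ℂ] A)

/-- The product `(1-e₁)⋯(1-eₙ)`. -/
def Pl (l : List G) : F α := (l.map fun e => 1 - ιG α e).prod

lemma Pl_nil : Pl α ([] : List G) = 1 := by simp [Pl]

lemma Pl_cons (e : G) (l : List G) : Pl α (e :: l) = (1 - ιG α e) * Pl α l := by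
  simp [Pl]

lemma foldl_eq (x : F α) (l : List G) :
    l.foldl (fun p e => p - p * ιG α e) x = x * Pl α l := by
  induction l generalizing x with
  | nil => simp [Pl_nil]
  | cons e l ih =>
    rw [List.foldl_cons, ih, Pl_cons, ← mul_assoc, mul_sub, mul_one]

lemma elemP_eq (e₀ : G) (l : List G) : elemP α e₀ l = ιG α e₀ * Pl α l :=
  foldl_eq α (ιG α e₀) l

/-- commuting `ιG f` past `1 - ιG e`. -/
lemma comm_one_sub {f e : G} (hf : f * f = f) (he : e * e = e) :
    ιG α f * (1 - ιG α e) = (1 - ιG α e) * ιG α f := by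
  rw [mul_sub, sub_mul, mul_one, one_mul, ← ιG_mul, ← ιG_mul, idem_comm hf he]

lemma comm_ιG_Pl {f : G} (hf : f * f = f) {l : List G} (hl : ∀ e ∈ l, e * e = e) :
    ιG α f * Pl α l = Pl α l * ιG α f := by
  induction l with
  | nil => rw [Pl_nil, one_mul, mul_one]
  | cons e l ih =>
    have he := hl e (List.mem_cons_self)
    have hl' : ∀ e' ∈ l, e' * e' = e' := fun e' h' => hl e' (List.mem_cons_of_mem _ h')
    rw [Pl_cons, ← mul_assoc, comm_one_sub α hf he, mul_assoc, ih hl', ← mul_assoc]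

lemma comm_sub_Pl {e : G} (he : e * e = e) {l : List G} (hl : ∀ e' ∈ l, e' * e' = e') :
    (1 - ιG α e) * Pl α l = Pl α l * (1 - ιG α e) := by
  rw [sub_mul, mul_sub, one_mul, mul_one, comm_ιG_Pl α he hl]

lemma comm_Pl_Pl {l l' : List G} (hl : ∀ e ∈ l, e * e = e) (hl' : ∀ e ∈ l', e * e = e) :
    Pl α l * Pl α l' = Pl α l' * Pl α l := by
  induction l with
  | nil => rw [Pl_nil, one_mul, mul_one]
  | cons e l ih =>
    have he := hl e (List.mem_cons_self)
    have hl2 : ∀ e' ∈ l, e' * e' = e' := fun e' h' => hl e' (List.mem_cons_of_mem _ h')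
    rw [Pl_cons, mul_assoc, ih hl2, ← mul_assoc, comm_sub_Pl α he hl', mul_assoc]

lemma Pl_idem {l : List G} (hl : ∀ e ∈ l, e * e = e) : Pl α l * Pl α l = Pl α l := by
  induction l with
  | nil => rw [Pl_nil, one_mul]
  | cons e l ih =>
    have he := hl e (List.mem_cons_self)
    have hl2 : ∀ e' ∈ l, e' * e' = e' := fun e' h' => hl e' (List.mem_cons_of_mem _ h')
    have h1 : (1 - ιG α e) * (1 - ιG α e) = 1 - ιG α e := by
      rw [mul_sub, sub_mul, sub_mul, mul_one, one_mul, ← ιG_mul, he]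
      simp
    calc Pl α (e :: l) * Pl α (e :: l)
        = (1 - ιG α e) * (Pl α l * (1 - ιG α e)) * Pl α l := by
          rw [Pl_cons]; simp only [mul_assoc]
      _ = (1 - ιG α e) * ((1 - ιG α e) * Pl α l) * Pl α l := by
          rw [comm_sub_Pl α he hl2]
      _ = ((1 - ιG α e) * (1 - ιG α e)) * (Pl α l * Pl α l) := by
          simp only [mul_assoc]
      _ = Pl α (e :: l) := by rw [h1, ih hl2, Pl_cons]

lemma Pl_star {l : List G} (hl : ∀ e ∈ l, e * e = e) : star (Pl α l) = Pl α l := by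
  induction l with
  | nil => rw [Pl_nil, star_one]
  | cons e l ih =>
    have he := hl e (List.mem_cons_self)
    have hl2 : ∀ e' ∈ l, e' * e' = e' := fun e' h' => hl e' (List.mem_cons_of_mem _ h')
    rw [Pl_cons, star_mul, star_sub, star_one, ← ιG_star, star_idem he, ih hl2,
      comm_sub_Pl α he hl2]

/-- the conjugation/swap lemma: `g ⋅ Pl l = Pl (g l g*) ⋅ g`. -/
lemma swap_Pl (g : G) {l : List G} (hl : ∀ e ∈ l, e * e = e) :
    ιG α g * Pl α l = Pl α (l.map fun e => g * e * star g) * ιG α g := by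
  induction l with
  | nil => rw [Pl_nil, List.map_nil, Pl_nil, one_mul, mul_one]
  | cons e l ih =>
    have he := hl e (List.mem_cons_self)
    have hl2 : ∀ e' ∈ l, e' * e' = e' := fun e' h' => hl e' (List.mem_cons_of_mem _ h')
    have h1 : ιG α g * (1 - ιG α e) = (1 - ιG α (g * e * star g)) * ιG α g := by
      rw [mul_sub, sub_mul, mul_one, one_mul, ← ιG_mul, ← ιG_mul, conj_absorb g he]
    rw [Pl_cons, List.map_cons, Pl_cons, ← mul_assoc, h1, mul_assoc, ih hl2, ← mul_assoc]

lemma elemP_conj (g e₀ : G) {l : List G} (he₀ : e₀ * e₀ = e₀) (hl : ∀ e ∈ l, e * e = e) :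
    ιG α g * elemP α e₀ l * ιG α (star g) =
      elemP α (g * e₀ * star g) (l.map fun e => g * e * star g) := by
  have hmap : ∀ e' ∈ l.map (fun e => g * e * star g), e' * e' = e' := by
    intro e' h'
    obtain ⟨e, hel, rfl⟩ := List.mem_map.mp h'
    exact conj_idem g (hl e hel)
  rw [elemP_eq, elemP_eq, ← mul_assoc, mul_assoc (ιG α g), comm_ιG_Pl α he₀ hl,
    ← mul_assoc, swap_Pl α g hl]
  calc Pl α (l.map fun e => g * e * star g) * ιG α g * ιG α e₀ * ιG α (star g)
      = Pl α (l.map fun e => g * e * star g) * ιG α (g * e₀ * star g) := by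
        rw [mul_assoc, mul_assoc, ← ιG_mul, ← ιG_mul, ← mul_assoc]
  _ = ιG α (g * e₀ * star g) * Pl α (l.map fun e => g * e * star g) := by
        rw [comm_ιG_Pl α (conj_idem g he₀) hmap]

lemma elemP_comm {e₀ f₀ : G} {l m : List G} (he₀ : e₀ * e₀ = e₀) (hf₀ : f₀ * f₀ = f₀)
    (hl : ∀ e ∈ l, e * e = e) (hm : ∀ e ∈ m, e * e = e) :
    elemP α e₀ l * elemP α f₀ m = elemP α f₀ m * elemP α e₀ l := by
  rw [elemP_eq, elemP_eq]
  calc ιG α e₀ * Pl α l * (ιG α f₀ * Pl α m)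
      = ιG α e₀ * ((Pl α l * ιG α f₀) * Pl α m) := by simp only [mul_assoc]
    _ = ιG α e₀ * ((ιG α f₀ * Pl α l) * Pl α m) := by rw [← comm_ιG_Pl α hf₀ hl]
    _ = (ιG α e₀ * ιG α f₀) * (Pl α l * Pl α m) := by simp only [mul_assoc]
    _ = (ιG α f₀ * ιG α e₀) * (Pl α m * Pl α l) := by
        rw [← ιG_mul, idem_comm he₀ hf₀, ιG_mul, comm_Pl_Pl α hl hm]
    _ = ιG α f₀ * ((ιG α e₀ * Pl α m) * Pl α l) := by simp only [mul_assoc]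
    _ = ιG α f₀ * ((Pl α m * ιG α e₀) * Pl α l) := by rw [comm_ιG_Pl α he₀ hm]
    _ = ιG α f₀ * Pl α m * (ιG α e₀ * Pl α l) := by simp only [mul_assoc]

lemma elemP_mul_ιG {e₀ f : G} {l : List G} (he₀ : e₀ * e₀ = e₀) (hf : f * f = f)
    (hl : ∀ e ∈ l, e * e = e) :
    ιG α f * elemP α e₀ l = elemP α (f * e₀) l := by
  rw [elemP_eq, elemP_eq, ← mul_assoc, ← ιG_mul]

end Pl
end Aux
end Green
namespace Green
namespace Aux
set_option linter.unusedSectionVars false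

section EHfacts
variable {G : Type*} [InverseSemigroup G]
variable {A : Type*} [NonUnitalNormedRing A] [StarRing A] [CStarRing A] [NormedSpace ℂ A]
  [IsScalarTower ℂ A A] [SMulCommClass ℂ A A] [StarModule ℂ A] [CompleteSpace A]
variable (α : G → A →⋆ₙₐ[ℂ] A)

lemma elemP_star {e₀ : G} {l : List G} (he₀ : e₀ * e₀ = e₀) (hl : ∀ e ∈ l, e * e = e) :
    star (elemP α e₀ l) = elemP α e₀ l := by
  rw [elemP_eq, star_mul, Pl_star α hl, ← ιG_star, star_idem he₀, ← comm_ιG_Pl α he₀ hl]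

lemma elemP_idem {e₀ : G} {l : List G} (he₀ : e₀ * e₀ = e₀) (hl : ∀ e ∈ l, e * e = e) :
    elemP α e₀ l * elemP α e₀ l = elemP α e₀ l := by
  rw [elemP_eq]
  calc ιG α e₀ * Pl α l * (ιG α e₀ * Pl α l)
      = ιG α e₀ * ((Pl α l * ιG α e₀) * Pl α l) := by simp only [mul_assoc]
    _ = ιG α e₀ * ((ιG α e₀ * Pl α l) * Pl α l) := by rw [← comm_ιG_Pl α he₀ hl]
    _ = (ιG α e₀ * ιG α e₀) * (Pl α l * Pl α l) := by simp only [mul_assoc]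
    _ = ιG α e₀ * Pl α l := by rw [← ιG_mul, he₀, Pl_idem α hl]

/-- The "diagonal" elements: those of the form `elemP e₀ l` with everything idempotent. -/
def Dg : Set (F α) :=
  {x | ∃ (e₀ : G) (l : List G), e₀ * e₀ = e₀ ∧ (∀ e ∈ l, e * e = e) ∧ x = elemP α e₀ l}

variable (S : Set G)

lemma EH_sub_Dg {p : F α} (hp : p ∈ EH α S) : p ∈ Dg α := by
  obtain ⟨e₀, l, he₀, hl, rfl⟩ := hp
  exact ⟨e₀, l, he₀.2, fun e he => (hl e he).2, rfl⟩

lemma Dg_star {p : F α} (hp : p ∈ Dg α) : star p = p := by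
  obtain ⟨e₀, l, he₀, hl, rfl⟩ := hp
  exact elemP_star α he₀ hl

lemma Dg_idem {p : F α} (hp : p ∈ Dg α) : p * p = p := by
  obtain ⟨e₀, l, he₀, hl, rfl⟩ := hp
  exact elemP_idem α he₀ hl

lemma Dg_comm_ιG {p : F α} (hp : p ∈ Dg α) {f : G} (hf : f * f = f) :
    ιG α f * p = p * ιG α f := by
  obtain ⟨e₀, l, he₀, hl, rfl⟩ := hp
  rw [elemP_eq]
  calc ιG α f * (ιG α e₀ * Pl α l) = (ιG α f * ιG α e₀) * Pl α l := by rw [mul_assoc]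
    _ = (ιG α e₀ * ιG α f) * Pl α l := by rw [← ιG_mul, idem_comm hf he₀, ιG_mul]
    _ = ιG α e₀ * (ιG α f * Pl α l) := by rw [mul_assoc]
    _ = ιG α e₀ * (Pl α l * ιG α f) := by rw [comm_ιG_Pl α hf hl]
    _ = ιG α e₀ * Pl α l * ιG α f := by rw [mul_assoc]

lemma Dg_comm {p q : F α} (hp : p ∈ Dg α) (hq : q ∈ Dg α) : p * q = q * p := by
  obtain ⟨e₀, l, he₀, hl, rfl⟩ := hp
  obtain ⟨f₀, m, hf₀, hm, rfl⟩ := hq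
  exact elemP_comm α he₀ hf₀ hl hm

lemma Dg_conj {p : F α} (hp : p ∈ Dg α) (g : G) :
    ιG α g * p * ιG α (star g) ∈ Dg α := by
  obtain ⟨e₀, l, he₀, hl, rfl⟩ := hp
  refine ⟨g * e₀ * star g, l.map fun e => g * e * star g, conj_idem g he₀, ?_, ?_⟩
  · intro e' h'
    obtain ⟨e, hel, rfl⟩ := List.mem_map.mp h'
    exact conj_idem g (hl e hel)
  · exact (elemP_conj α g e₀ he₀ hl)

lemma Dg_mul_ιG_mem {p : F α} (hp : p ∈ Dg α) {f : G} (hf : f * f = f) :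
    ιG α f * p ∈ Dg α := by
  obtain ⟨e₀, l, he₀, hl, rfl⟩ := hp
  exact ⟨f * e₀, l, mul_idem_of_idem hf he₀, hl, (elemP_mul_ιG α he₀ hf hl)⟩

lemma EH_mul_ιG_mem {p : F α} (hp : p ∈ EH α S) (hS : IsSubInvSemigroup S) {f : G}
    (hfS : f ∈ S) (hf : f * f = f) : ιG α f * p ∈ EH α S := by
  obtain ⟨e₀, l, he₀, hl, rfl⟩ := hp
  exact ⟨f * e₀, l, ⟨hS.mul_mem hfS he₀.1, mul_idem_of_idem hf he₀.2⟩, hl,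
    (elemP_mul_ιG α he₀.2 hf (fun e he => (hl e he).2))⟩

lemma EH_conj_mem {p : F α} (hp : p ∈ EH α S) (hS : IsSubInvSemigroup S) {t : G}
    (htS : t ∈ S) : ιG α t * p * ιG α (star t) ∈ EH α S := by
  obtain ⟨e₀, l, he₀, hl, rfl⟩ := hp
  refine ⟨t * e₀ * star t, l.map fun e => t * e * star t,
    ⟨hS.mul_mem (hS.mul_mem htS he₀.1) (hS.star_mem htS), conj_idem t he₀.2⟩, ?_,
    (elemP_conj α t e₀ he₀.2 (fun e he => (hl e he).2))⟩
  intro e' h'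
  obtain ⟨e, hel, rfl⟩ := List.mem_map.mp h'
  exact ⟨hS.mul_mem (hS.mul_mem htS (hl e hel).1) (hS.star_mem htS), conj_idem t (hl e hel).2⟩

end EHfacts
end Aux
end Green
namespace Green
namespace Aux
set_option linter.unusedSectionVars false

section PartA
variable {G : Type*} [InverseSemigroup G]
variable {A : Type*} [NonUnitalNormedRing A] [StarRing A] [CStarRing A] [NormedSpace ℂ A]
  [IsScalarTower ℂ A A] [SMulCommClass ℂ A A] [StarModule ℂ A] [CompleteSpace A]
variable (α : G → A →⋆ₙₐ[ℂ] A)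

lemma star_rep {e₁ : F α} (he : e₁ ∈ Dg α) (g₁ : G) :
    star (ιG α g₁ * e₁) = e₁ * ιG α (star g₁) := by
  rw [star_mul, Dg_star α he, ← ιG_star]

lemma rep_ss {e₁ : F α} (he : e₁ ∈ Dg α) {g₁ : G} (habs : e₁ * ιG α (star g₁ * g₁) = e₁) :
    star (ιG α g₁ * e₁) * (ιG α g₁ * e₁) = e₁ := by
  rw [star_rep α he]
  calc e₁ * ιG α (star g₁) * (ιG α g₁ * e₁)
      = e₁ * (ιG α (star g₁) * ιG α g₁) * e₁ := by simp only [mul_assoc]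
    _ = e₁ * ιG α (star g₁ * g₁) * e₁ := by rw [← ιG_mul]
    _ = e₁ * e₁ := by rw [habs]
    _ = e₁ := Dg_idem α he

variable (S : Set G)

lemma partA (σ : G) (v : F α) (hv : v ∈ GH α S) (hσv : ιG α (star σ) * v ∈ GH α S) :
    ιG α (σ * star σ) * v = v := by
  obtain ⟨vne, g₁, e₁, he₁, hvrep, habs₁⟩ := hv
  obtain ⟨wne, g₂, e₂, he₂, hwrep, habs₂⟩ := hσv
  have he₁D : e₁ ∈ Dg α := EH_sub_Dg α S he₁.1
  have he₂D : e₂ ∈ Dg α := EH_sub_Dg α S he₂.1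
  have hpidem : (σ * star σ) * (σ * star σ) = σ * star σ := idem_gs σ
  have hf : (star g₁ * (σ * star σ) * g₁) * (star g₁ * (σ * star σ) * g₁) =
      star g₁ * (σ * star σ) * g₁ := by
    have := conj_idem (star g₁) hpidem
    rwa [star_star'] at this
  have way1 : star (ιG α (star σ) * v) * (ιG α (star σ) * v) = e₂ := by
    rw [hwrep]; exact rep_ss α he₂D habs₂
  have hcomb : ιG α (star σ) * v = ιG α (star σ * g₁) * e₁ := by
    rw [hvrep, ← mul_assoc, ← ιG_mul]
  have hstarcomb : star (star σ * g₁) = star g₁ * σ := by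
    rw [star_mul', star_star']
  have hassoc : (star g₁ * σ) * (star σ * g₁) = star g₁ * (σ * star σ) * g₁ := by
    simp only [mul_assoc]
  have way2 : star (ιG α (star σ) * v) * (ιG α (star σ) * v) =
      ιG α (star g₁ * (σ * star σ) * g₁) * e₁ := by
    rw [hcomb, star_rep α he₁D, hstarcomb]
    calc e₁ * ιG α (star g₁ * σ) * (ιG α (star σ * g₁) * e₁)
        = e₁ * (ιG α (star g₁ * σ) * ιG α (star σ * g₁)) * e₁ := by simp only [mul_assoc]
      _ = e₁ * ιG α (star g₁ * (σ * star σ) * g₁) * e₁ := by rw [← ιG_mul, hassoc]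
      _ = ιG α (star g₁ * (σ * star σ) * g₁) * e₁ * e₁ := by
          rw [← Dg_comm_ιG α he₁D hf]
      _ = ιG α (star g₁ * (σ * star σ) * g₁) * e₁ := by
          rw [mul_assoc, Dg_idem α he₁D]
  have hkey : ιG α (star g₁ * (σ * star σ) * g₁) * e₁ = e₂ := way2.symm.trans way1
  have he₂e₁ : e₂ * e₁ = e₂ := by rw [← hkey, mul_assoc, Dg_idem α he₁D]
  have hmin : e₂ = e₁ := he₁.2.2 e₂ he₂.1 he₂.2.1 he₂e₁
  have hfe : ιG α (star g₁ * (σ * star σ) * g₁) * e₁ = e₁ := hkey.trans hmin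
  have hg₁f : g₁ * (star g₁ * (σ * star σ) * g₁) = (σ * star σ) * g₁ := by
    calc g₁ * (star g₁ * (σ * star σ) * g₁)
        = (g₁ * star g₁) * (σ * star σ) * g₁ := by simp only [mul_assoc]
      _ = (σ * star σ) * (g₁ * star g₁) * g₁ := by rw [idem_comm (idem_gs g₁) (idem_gs σ)]
      _ = (σ * star σ) * (g₁ * star g₁ * g₁) := by simp only [mul_assoc]
      _ = (σ * star σ) * g₁ := by rw [mss]
  rw [hvrep]
  calc ιG α (σ * star σ) * (ιG α g₁ * e₁)
      = ιG α ((σ * star σ) * g₁) * e₁ := by rw [← mul_assoc, ← ιG_mul]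
    _ = ιG α (g₁ * (star g₁ * (σ * star σ) * g₁)) * e₁ := by rw [hg₁f]
    _ = ιG α g₁ * (ιG α (star g₁ * (σ * star σ) * g₁) * e₁) := by rw [ιG_mul, mul_assoc]
    _ = ιG α g₁ * e₁ := by rw [hfe]

end PartA
end Aux
end Green
namespace Green

/-- Let `G` be an inverse semigroup, `H' = S ⊆ G` a finite sub-inverse
semigroup and `A` a `G`-algebra.  (a) For all `s ∈ G` and `h ∈ G_H` with `s*·h ∈ G_H`,
one has `s s*·h h* = h h*` (i.e. `s s* ≥ h h*`) in `𝔽(G,A)`.  (b) If moreover `g ∈ G_H`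
satisfies `g*·s*·h ∈ H`, then `g g* = (s* h)(s* h)*` and `s*·h ≡ g`. -/
theorem ssstar_ge_hhstar_and_equiv
    {G : Type*} [InverseSemigroup G]
    {A : Type*} [NonUnitalNormedRing A] [StarRing A] [CStarRing A] [NormedSpace ℂ A]
    [IsScalarTower ℂ A A] [SMulCommClass ℂ A A] [StarModule ℂ A] [CompleteSpace A]
    (α : G → A →⋆ₙₐ[ℂ] A) (hα : IsGAlgebra α)
    (S : Set G) (hS : IsSubInvSemigroup S) (hSfin : S.Finite)
    (s : G) (h : F α) (hh : h ∈ GH α S) :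
    (ιG α (star s) * h ∈ GH α S →
      ιG α (s * star s) * (h * star h) = h * star h) ∧
    (∀ g ∈ GH α S, ιG α (star s) * h ∈ GH α S →
      star g * (ιG α (star s) * h) ∈ Hgpd α S →
      g * star g = (ιG α (star s) * h) * star (ιG α (star s) * h) ∧
        equivH α S (ιG α (star s) * h) g) := by
  open Aux in
  constructor
  · intro hu
    rw [← mul_assoc, Aux.partA α S s h hh hu]
  · intro g hg hu hw
    set u := ιG α (star s) * h with hu_def
    set w := star g * u with hw_def
    obtain ⟨gne, g₂, e₂, he₂, hgrep, hgabs⟩ := hg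
    obtain ⟨une, g₁, e₁, he₁, hurep, huabs⟩ := hu
    obtain ⟨wne, t, htS, e₃, he₃, hwrep⟩ := hw
    have he₁D : e₁ ∈ Aux.Dg α := Aux.EH_sub_Dg α S he₁.1
    have he₂D : e₂ ∈ Aux.Dg α := Aux.EH_sub_Dg α S he₂.1
    have he₃D : e₃ ∈ Aux.Dg α := Aux.EH_sub_Dg α S he₃.1
    -- basic absorption facts
    have u_e : u * e₁ = u := by rw [hurep, mul_assoc, Aux.Dg_idem α he₁D]
    have g_e : g * e₂ = g := by rw [hgrep, mul_assoc, Aux.Dg_idem α he₂D]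
    have hstarg : star g = e₂ * ιG α (star g₂) := by rw [hgrep, Aux.star_rep α he₂D]
    have e₂_stg : e₂ * star g = star g := by
      rw [hstarg, ← mul_assoc, Aux.Dg_idem α he₂D]
    have e₂w : e₂ * w = w := by rw [hw_def, ← mul_assoc, e₂_stg]
    have uu : star u * u = e₁ := by rw [hurep]; exact Aux.rep_ss α he₁D huabs
    have gg : star g * g = e₂ := by rw [hgrep]; exact Aux.rep_ss α he₂D hgabs
    -- e₃ absorbs star t * t
    have htt : (star t * t) * (star t * t) = star t * t := Aux.idem_sg t
    have hq_mem : ιG α (star t * t) * e₃ ∈ EH α S :=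
      Aux.EH_mul_ιG_mem α S he₃.1 hS (hS.mul_mem (hS.star_mem htS) htS) htt
    have hfold : ιG α t * (ιG α (star t * t) * e₃) = ιG α t * e₃ := by
      rw [← mul_assoc, ← Aux.ιG_mul, Aux.ssg]
    have hq_ne : ιG α (star t * t) * e₃ ≠ 0 := by
      intro h0
      exact wne (by rw [hwrep, ← hfold, h0, mul_zero])
    have hq_le : (ιG α (star t * t) * e₃) * e₃ = ιG α (star t * t) * e₃ := by
      rw [mul_assoc, Aux.Dg_idem α he₃D]
    have habs₃' : ιG α (star t * t) * e₃ = e₃ := he₃.2.2 _ hq_mem hq_ne hq_le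
    have habs₃ : e₃ * ιG α (star t * t) = e₃ := by
      rw [← Aux.Dg_comm_ιG α he₃D htt, habs₃']
    -- star w * w = e₃ and e₃ = e₁
    have ww : star w * w = e₃ := by rw [hwrep]; exact Aux.rep_ss α he₃D habs₃
    have w_e₁ : w * e₁ = w := by rw [hw_def, mul_assoc, u_e]
    have he₃e₁ : e₃ = e₁ := by
      refine he₁.2.2 e₃ he₃.1 he₃.2.1 ?_
      rw [← ww, mul_assoc, w_e₁]
    rw [he₃e₁] at hwrep habs₃' habs₃ ww he₃D
    -- w * star w = e₂
    have hws : star w = e₁ * ιG α (star t) := by rw [hwrep, Aux.star_rep α he₁D]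
    have hp_form : w * star w = ιG α t * e₁ * ιG α (star t) := by
      rw [hwrep, Aux.star_rep α he₁D]
      calc ιG α t * e₁ * (e₁ * ιG α (star t))
          = ιG α t * (e₁ * e₁) * ιG α (star t) := by simp only [mul_assoc]
        _ = ιG α t * e₁ * ιG α (star t) := by rw [Aux.Dg_idem α he₁D]
    have hp_mem : w * star w ∈ EH α S := by
      rw [hp_form]; exact Aux.EH_conj_mem α S he₁.1 hS htS
    have hwww : w * star w * w = w := by rw [mul_assoc, ww, w_e₁]
    have hp_ne : w * star w ≠ 0 := by
      intro h0
      exact wne (by rw [← hwww, h0, zero_mul])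
    have hse : star w * e₂ = star w := by
      have h1 := congrArg star e₂w
      rw [star_mul, Aux.Dg_star α he₂D] at h1
      exact h1
    have hp_le : (w * star w) * e₂ = w * star w := by rw [mul_assoc, hse]
    have hpe₂ : w * star w = e₂ := he₂.2.2 _ hp_mem hp_ne hp_le
    -- the projections Q = u u*, R = g g* commute
    have hus : star u = e₁ * ιG α (star g₁) := by rw [hurep, Aux.star_rep α he₁D]
    have hgs : star g = e₂ * ιG α (star g₂) := hstarg
    have hQ_form : u * star u = ιG α g₁ * e₁ * ιG α (star g₁) := by
      rw [hurep, Aux.star_rep α he₁D]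
      calc ιG α g₁ * e₁ * (e₁ * ιG α (star g₁))
          = ιG α g₁ * (e₁ * e₁) * ιG α (star g₁) := by simp only [mul_assoc]
        _ = ιG α g₁ * e₁ * ιG α (star g₁) := by rw [Aux.Dg_idem α he₁D]
    have hR_form : g * star g = ιG α g₂ * e₂ * ιG α (star g₂) := by
      rw [hgrep, Aux.star_rep α he₂D]
      calc ιG α g₂ * e₂ * (e₂ * ιG α (star g₂))
          = ιG α g₂ * (e₂ * e₂) * ιG α (star g₂) := by simp only [mul_assoc]
        _ = ιG α g₂ * e₂ * ιG α (star g₂) := by rw [Aux.Dg_idem α he₂D]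
    have hQD : u * star u ∈ Aux.Dg α := by rw [hQ_form]; exact Aux.Dg_conj α he₁D g₁
    have hRD : g * star g ∈ Aux.Dg α := by rw [hR_form]; exact Aux.Dg_conj α he₂D g₂
    have hQRcomm : (u * star u) * (g * star g) = (g * star g) * (u * star u) :=
      Aux.Dg_comm α hQD hRD
    have hQidem : (u * star u) * (u * star u) = u * star u := by
      calc (u * star u) * (u * star u) = u * (star u * u) * star u := by
            simp only [mul_assoc]
        _ = u * e₁ * star u := by rw [uu]
        _ = u * star u := by rw [u_e]
    have hRidem : (g * star g) * (g * star g) = g * star g := by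
      calc (g * star g) * (g * star g) = g * (star g * g) * star g := by
            simp only [mul_assoc]
        _ = g * e₂ * star g := by rw [gg]
        _ = g * star g := by rw [g_e]
    have hsw : star w = star u * g := by rw [hw_def, star_mul, star_star]
    have hQRQ : (u * star u) * (g * star g) * (u * star u) = u * star u := by
      calc (u * star u) * (g * star g) * (u * star u)
          = u * ((star u * g) * (star g * u)) * star u := by simp only [mul_assoc]
        _ = u * (star w * w) * star u := by rw [← hsw, ← hw_def]
        _ = u * e₁ * star u := by rw [ww]
        _ = u * star u := by rw [u_e]
    have hRQR : (g * star g) * (u * star u) * (g * star g) = g * star g := by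
      calc (g * star g) * (u * star u) * (g * star g)
          = g * ((star g * u) * (star u * g)) * star g := by simp only [mul_assoc]
        _ = g * (w * star w) * star g := by rw [← hw_def, ← hsw]
        _ = g * e₂ * star g := by rw [hpe₂]
        _ = g * star g := by rw [g_e]
    have hQ' : u * star u = (u * star u) * (g * star g) := by
      conv_lhs => rw [← hQRQ]
      calc (u * star u) * (g * star g) * (u * star u)
          = (u * star u) * ((g * star g) * (u * star u)) := by rw [mul_assoc]
        _ = (u * star u) * ((u * star u) * (g * star g)) := by rw [← hQRcomm]
        _ = ((u * star u) * (u * star u)) * (g * star g) := by rw [← mul_assoc]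
        _ = (u * star u) * (g * star g) := by rw [hQidem]
    have hR' : g * star g = (u * star u) * (g * star g) := by
      conv_lhs => rw [← hRQR]
      calc (g * star g) * (u * star u) * (g * star g)
          = ((u * star u) * (g * star g)) * (g * star g) := by rw [hQRcomm]
        _ = (u * star u) * ((g * star g) * (g * star g)) := by rw [mul_assoc]
        _ = (u * star u) * (g * star g) := by rw [hRidem]
    have hReqQ : g * star g = u * star u := hR'.trans hQ'.symm
    refine ⟨hReqQ, ?_⟩
    -- the witness star w ∈ H implements u ≡ g
    have hE : e₂ = ιG α t * e₁ * ιG α (star t) := hpe₂.symm.trans hp_form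
    have hsw_ne : star w ≠ 0 := by
      intro h0
      exact wne (by rw [← star_star w, h0, star_zero])
    have hsw_form : ιG α (star t) * e₂ = star w := by
      calc ιG α (star t) * e₂ = ιG α (star t) * (ιG α t * e₁ * ιG α (star t)) := by rw [hE]
        _ = ιG α (star t) * ιG α t * e₁ * ιG α (star t) := by simp only [mul_assoc]
        _ = ιG α (star t * t) * e₁ * ιG α (star t) := by rw [← Aux.ιG_mul]
        _ = e₁ * ιG α (star t) := by rw [habs₃']
        _ = star w := hws.symm
    refine ⟨star w, ⟨hsw_ne, star t, hS.star_mem htS, e₂, he₂, hsw_form.symm⟩, ?_⟩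
    calc u * star w = (u * star u) * g := by rw [hsw, ← mul_assoc]
      _ = (g * star g) * g := by rw [← hReqQ]
      _ = g * (star g * g) := by rw [mul_assoc]
      _ = g * e₂ := by rw [gg]
      _ = g := g_e

end Green
end
end

section
/- Let G be an inverse semigroup, H' ⊆ G a finite sub-inverse semigroup, and A a G-algebra. For all a, b ∈ A and g, h ∈ G_H, the following identity holds in 𝔽(G,A): ([g* h ∈ H] · α_{g*}(a*·b) · (g* h))* = [h* g ∈ H] · α_{h*}(b*·a) · (h* g), where [P] is the scalar 1 if P holds and 0 otherwise. (This is the identity ⟨x,y⟩_{B₀}* = ⟨y,x⟩_{B₀} on standard elements x = a⋊g, y = b⋊h.) -/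
/-! Common setup: inverse semigroups, G-algebras, and the universal *-algebra 𝔽(G,A). -/

noncomputable section

namespace Green

section Semigroup
variable {G : Type*} [InverseSemigroup G]

lemma gsg (g : G) : g * star g * g = g := InverseSemigroup.mul_star_mul_self g
lemma sgs (g : G) : star g * g * star g = star g := InverseSemigroup.star_mul_self_mul_star g

lemma sstar (g : G) : star (star g) = g :=
  (InverseSemigroup.star_unique (star g) g (sgs g) (gsg g)).symm

/-- product of two idempotents is idempotent, and the star of `e*f` is itself.  -/
lemma idem_mul_idem_aux {e f : G} (he : e * e = e) (hf : f * f = f) :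
    (e * f) * (e * f) = e * f := by
  -- let x := star (e*f); show f*x*e is an inverse of e*f, hence equals x; then x idempotent etc.
  set p := e * f with hp
  set x := star p with hx
  have h1 : p * x * p = p := gsg p
  have h2 : x * p * x = x := sgs p
  -- f * x * e is an inverse of p
  have hinv1 : p * (f * x * e) * p = p := by
    have : p * (f * x * e) * p = (e * (f * f)) * x * ((e * e) * f) := by
      simp only [hp]; noncomm_ring
    rw [hf, he] at this
    rw [this]
    exact h1
  have hinv2 : (f * x * e) * p * (f * x * e) = f * x * e := by
    have : (f * x * e) * p * (f * x * e) = f * (x * ((e * e) * (f * f)) * x) * e := by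
      simp only [hp]; noncomm_ring
    rw [he, hf] at this
    rw [this]
    have : x * (e * f) * x = x := by rw [← hp]; exact h2
    rw [this]
  have hxfe : f * x * e = x := InverseSemigroup.star_unique p (f * x * e) hinv1 hinv2
  -- x is idempotent
  have hxx : x * x = x := by
    conv_lhs => rw [← hxfe]
    have : f * x * e * (f * x * e) = f * (x * (e * f) * x) * e := by noncomm_ring
    rw [this, ← hp, h2, hxfe]
  -- x = star x
  have hxsx : x = star x := InverseSemigroup.star_unique x x (by rw [hxx, hxx]) (by rw [hxx, hxx])
  -- p = star x = x
  have hpx : p = x := by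
    have h := sstar p
    rw [← hx] at h
    rw [← hxsx] at h
    exact h.symm
  rw [← hpx] at hxx
  exact hxx

/-- Idempotents commute (Howie). -/
lemma idem_comm {e f : G} (he : e * e = e) (hf : f * f = f) : e * f = f * e := by
  have hef : (e * f) * (e * f) = e * f := idem_mul_idem_aux he hf
  have hfe : (f * e) * (f * e) = f * e := idem_mul_idem_aux hf he
  -- f*e is an inverse of e*f
  have h1 : (e * f) * (f * e) * (e * f) = e * f := by
    have : (e * f) * (f * e) * (e * f) = e * (f * f) * (e * e) * f := by noncomm_ring
    rw [this, hf, he]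
    have : e * f * e * f = (e * f) * (e * f) := by noncomm_ring
    rw [this, hef]
  have h2 : (f * e) * (e * f) * (f * e) = f * e := by
    have : (f * e) * (e * f) * (f * e) = f * (e * e) * (f * f) * e := by noncomm_ring
    rw [this, he, hf]
    have : f * e * f * e = (f * e) * (f * e) := by noncomm_ring
    rw [this, hfe]
  have hfe_star : f * e = star (e * f) := InverseSemigroup.star_unique (e * f) (f * e) h1 h2
  have hef_star : e * f = star (e * f) := by
    exact InverseSemigroup.star_unique (e * f) (e * f)
      (by rw [hef, hef]) (by rw [hef, hef])
  rw [← hef_star] at hfe_star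
  exact hfe_star.symm

lemma star_idem {e : G} (he : e * e = e) : star e = e :=
  (InverseSemigroup.star_unique e e (by rw [he, he]) (by rw [he, he])).symm

lemma star_mul_rev (g h : G) : star (g * h) = star h * star g := by
  refine (InverseSemigroup.star_unique (g * h) (star h * star g) ?_ ?_).symm
  · have hgg : (star g * g) * (star g * g) = star g * g := by
      have := sgs g; have := gsg g
      calc star g * g * (star g * g) = star g * (g * star g * g) := by noncomm_ring
      _ = star g * g := by rw [gsg]
    have hhh : (h * star h) * (h * star h) = h * star h := by
      calc h * star h * (h * star h) = (h * star h * h) * star h := by noncomm_ring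
      _ = h * star h := by rw [gsg]
    have hcomm := idem_comm hgg hhh
    calc g * h * (star h * star g) * (g * h)
        = g * ((h * star h) * (star g * g)) * h := by noncomm_ring
    _ = g * ((star g * g) * (h * star h)) * h := by rw [hcomm]
    _ = (g * star g * g) * (h * star h * h) := by noncomm_ring
    _ = g * h := by rw [gsg, gsg]
  · have hgg : (star g * g) * (star g * g) = star g * g := by
      calc star g * g * (star g * g) = star g * (g * star g * g) := by noncomm_ring
      _ = star g * g := by rw [gsg]
    have hhh : (h * star h) * (h * star h) = h * star h := by
      calc h * star h * (h * star h) = (h * star h * h) * star h := by noncomm_ring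
      _ = h * star h := by rw [gsg]
    have hcomm := idem_comm hhh hgg
    calc star h * star g * (g * h) * (star h * star g)
        = star h * ((star g * g) * (h * star h)) * star g := by noncomm_ring
    _ = star h * ((h * star h) * (star g * g)) * star g := by rw [← hcomm]
    _ = (star h * h * star h) * (star g * g * star g) := by noncomm_ring
    _ = star h * star g := by rw [sgs, sgs]

lemma idem_ss (g : G) : (star g * g) * (star g * g) = star g * g := by
  calc star g * g * (star g * g) = star g * (g * star g * g) := by noncomm_ring
  _ = star g * g := by rw [gsg]

lemma idem_gs (g : G) : (g * star g) * (g * star g) = g * star g := by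
  calc g * star g * (g * star g) = (g * star g * g) * star g := by noncomm_ring
  _ = g * star g := by rw [gsg]

/-- conjugated idempotent is idempotent -/
lemma idem_conj {e : G} (he : e * e = e) (g : G) : (g * e * star g) * (g * e * star g) = g * e * star g := by
  have h1 : e * (star g * g) = (star g * g) * e := idem_comm he (idem_ss g)
  calc (g * e * star g) * (g * e * star g) = g * (e * (star g * g)) * (e * star g) := by noncomm_ring
  _ = g * ((star g * g) * e) * (e * star g) := by rw [h1]
  _ = (g * star g * g) * (e * e) * star g := by noncomm_ring
  _ = g * e * star g := by rw [he, gsg]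

end Semigroup

end Green

namespace Green

set_option linter.unusedSectionVars false

section Finfra
variable {G : Type*} [InverseSemigroup G]
variable {A : Type*} [NonUnitalNormedRing A] [StarRing A] [CStarRing A] [NormedSpace ℂ A]
  [IsScalarTower ℂ A A] [SMulCommClass ℂ A A] [StarModule ℂ A] [CompleteSpace A]
variable (α : G → A →⋆ₙₐ[ℂ] A)

local notation "mk" => RingQuot.mkAlgHom ℂ (Rel α)

lemma star_mk (x : FreeStar (A ⊕ G)) : star (mk x) = mk (star x) := by
  have h1 : ∀ y : FreeStar (A ⊕ G), mk y = ⟨Quot.mk _ y⟩ := by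
    intro y
    simp [RingQuot.mkAlgHom_def, RingQuot.mkRingHom_def]
  rw [h1, h1]
  rfl

lemma mkRel {x y : FreeStar (A ⊕ G)} (h : Rel α x y) : mk x = mk y :=
  RingQuot.mkAlgHom_rel ℂ h

lemma iG_mul (g h : G) : ιG α g * ιG α h = ιG α (g * h) := by
  rw [ιG, ιG, ιG, ← map_mul]
  exact (mkRel α (Rel.mul_G g h)).symm

lemma star_iG (g : G) : star (ιG α g) = ιG α (star g) := by
  rw [ιG, ιG, star_mk]
  exact (mkRel α (Rel.star_G g)).symm

lemma star_iA (a : A) : star (ιA α a) = ιA α (star a) := by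
  rw [ιA, ιA, star_mk]
  exact (mkRel α (Rel.star_A a)).symm

lemma iA_add (a b : A) : ιA α (a + b) = ιA α a + ιA α b := by
  rw [ιA, ιA, ιA, ← map_add]
  exact mkRel α (Rel.add_A a b)

lemma iA_smul (c : ℂ) (a : A) : ιA α (c • a) = c • ιA α a := by
  rw [ιA, ιA, ← map_smul]
  exact mkRel α (Rel.smul_A c a)

lemma iA_mul (a b : A) : ιA α (a * b) = ιA α a * ιA α b := by
  rw [ιA, ιA, ιA, ← map_mul]
  exact mkRel α (Rel.mul_A a b)

lemma iA_zero : ιA α (0 : A) = 0 := by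
  have := iA_smul α 0 0
  simpa using this

lemma iA_sub (a b : A) : ιA α (a - b) = ιA α a - ιA α b := by
  have h : a - b = a + (-1 : ℂ) • b := by
    rw [neg_one_smul]; abel
  rw [h, iA_add, iA_smul]
  rw [neg_one_smul ℂ (ιA α b)]
  abel

/-- relation act, in F -/
lemma rel_act (g : G) (a : A) :
    ιA α (α g a) * ιG α g * ιG α (star g) = ιG α g * ιA α a * ιG α (star g) := by
  have h := mkRel α (Rel.act g a)
  simpa only [ιA, ιG, map_mul] using h

/-- relation comm, in F -/
lemma rel_comm (g : G) (a : A) :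
    ιG α g * ιG α (star g) * ιA α a = ιA α a * (ιG α g * ιG α (star g)) := by
  have h := mkRel α (Rel.comm g a)
  simpa only [ιA, ιG, map_mul, mul_assoc] using h

lemma iG_idem {f : G} (hf : f * f = f) : ιG α f * ιG α f = ιG α f := by
  rw [iG_mul, hf]

/-- T1: image of an idempotent commutes with every `ιA a`. -/
lemma T1 {f : G} (hf : f * f = f) (a : A) : ιG α f * ιA α a = ιA α a * ιG α f := by
  have h := rel_comm α f a
  rw [star_idem hf] at h
  rw [iG_idem α hf] at h
  exact h

/-- T2: `ιA (α_f a) * ιG f = ιA a * ιG f` for an idempotent `f`. -/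
lemma T2 {f : G} (hf : f * f = f) (a : A) : ιA α (α f a) * ιG α f = ιA α a * ιG α f := by
  have h := rel_act α f a
  rw [star_idem hf] at h
  calc ιA α (α f a) * ιG α f = ιA α (α f a) * (ιG α f * ιG α f) := by rw [iG_idem α hf]
  _ = ιA α (α f a) * ιG α f * ιG α f := by rw [mul_assoc]
  _ = ιG α f * ιA α a * ιG α f := h
  _ = ιA α a * ιG α f * ιG α f := by rw [T1 α hf]
  _ = ιA α a * (ιG α f * ιG α f) := by rw [mul_assoc]
  _ = ιA α a * ιG α f := by rw [iG_idem α hf]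

/-- Covariance: `ιA (α_g a) ιG g = ιG g · ιA a · ιG (g* g)`. -/
lemma cov (g : G) (a : A) :
    ιA α (α g a) * ιG α g = ιG α g * ιA α a * ιG α (star g * g) := by
  calc ιA α (α g a) * ιG α g = ιA α (α g a) * ιG α (g * star g * g) := by rw [gsg]
  _ = ιA α (α g a) * (ιG α g * ιG α (star g) * ιG α g) := by rw [iG_mul, iG_mul]
  _ = (ιA α (α g a) * ιG α g * ιG α (star g)) * ιG α g := by noncomm_ring
  _ = (ιG α g * ιA α a * ιG α (star g)) * ιG α g := by rw [rel_act]
  _ = ιG α g * ιA α a * (ιG α (star g) * ιG α g) := by noncomm_ring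
  _ = ιG α g * ιA α a * ιG α (star g * g) := by rw [iG_mul]

/-- star-covariance: `ιG (g*) · ιA (α_g a) = ιG (g* g) · ιA a · ιG (g*)`. -/
lemma starcov (g : G) (a : A) :
    ιG α (star g) * ιA α (α g a) = ιG α (star g * g) * ιA α a * ιG α (star g) := by
  have h := cov α g (star a)
  have hl : star (ιA α (α g (star a)) * ιG α g) = ιG α (star g) * ιA α (α g a) := by
    rw [star_mul, star_iG, star_iA, map_star, star_star]
  have hr : star (ιG α g * ιA α (star a) * ιG α (star g * g)) =
      ιG α (star (star g * g)) * (ιA α a * ιG α (star g)) := by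
    rw [star_mul, star_mul, star_iG, star_iA, star_iG, star_star]
  have hs : star (star g * g) = star g * g := by rw [star_mul_rev, sstar]
  rw [hs] at hr
  have h2 := congrArg star h
  rw [hl, hr] at h2
  rw [h2]
  noncomm_ring

end Finfra

end Green

namespace Green

set_option linter.unusedSectionVars false

section ElemP
variable {G : Type*} [InverseSemigroup G]
variable {A : Type*} [NonUnitalNormedRing A] [StarRing A] [CStarRing A] [NormedSpace ℂ A]
  [IsScalarTower ℂ A A] [SMulCommClass ℂ A A] [StarModule ℂ A] [CompleteSpace A]
variable (α : G → A →⋆ₙₐ[ℂ] A)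

/-- the product `(1-ιG e₁)⋯(1-ιG eₙ)`. -/
def prodW (l : List G) : F α := (l.map (fun e => 1 - ιG α e)).prod

@[simp] lemma prodW_nil : prodW α ([] : List G) = 1 := rfl

lemma prodW_cons (e : G) (l : List G) :
    prodW α (e :: l) = (1 - ιG α e) * prodW α l := by
  simp [prodW]

lemma foldl_eq_mul_prodW (s : F α) (l : List G) :
    List.foldl (fun p e => p - p * ιG α e) s l = s * prodW α l := by
  induction l generalizing s with
  | nil => simp [prodW]
  | cons e l ih =>
      rw [List.foldl_cons, ih, prodW_cons]
      have : s - s * ιG α e = s * (1 - ιG α e) := by rw [mul_sub, mul_one]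
      rw [this, mul_assoc]

lemma elemP_eq (e₀ : G) (l : List G) : elemP α e₀ l = ιG α e₀ * prodW α l :=
  foldl_eq_mul_prodW α _ l

lemma iG_comm {e f : G} (he : e * e = e) (hf : f * f = f) :
    ιG α e * ιG α f = ιG α f * ιG α e := by
  rw [iG_mul, iG_mul, idem_comm he hf]

/-- an element commuting with `ιG e` for all idempotents `e ∈ l` commutes with `prodW l`. -/
lemma prodW_comm_of (l : List G) (x : F α) (h : ∀ e ∈ l, ιG α e * x = x * ιG α e) :
    prodW α l * x = x * prodW α l := by
  induction l with
  | nil => simp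
  | cons e l ih =>
      rw [prodW_cons]
      have h1 : (1 - ιG α e) * x = x * (1 - ιG α e) := by
        have hx := h e (List.mem_cons_self)
        rw [sub_mul, mul_sub, one_mul, mul_one, hx]
      have h2 := ih (fun e' he' => h e' (List.mem_cons_of_mem e he'))
      calc (1 - ιG α e) * prodW α l * x = (1 - ιG α e) * (prodW α l * x) := by rw [mul_assoc]
      _ = (1 - ιG α e) * (x * prodW α l) := by rw [h2]
      _ = ((1 - ιG α e) * x) * prodW α l := by rw [mul_assoc]
      _ = (x * (1 - ιG α e)) * prodW α l := by rw [h1]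
      _ = x * ((1 - ιG α e) * prodW α l) := by rw [mul_assoc]

lemma prodW_comm_iA (l : List G) (hl : ∀ e ∈ l, e * e = e) (a : A) :
    prodW α l * ιA α a = ιA α a * prodW α l :=
  prodW_comm_of α l _ (fun e he => T1 α (hl e he) a)

lemma prodW_comm_iG (l : List G) (hl : ∀ e ∈ l, e * e = e) {f : G} (hf : f * f = f) :
    prodW α l * ιG α f = ιG α f * prodW α l :=
  prodW_comm_of α l _ (fun e he => iG_comm α (hl e he) hf)

lemma prodW_comm_prodW (l m : List G) (hl : ∀ e ∈ l, e * e = e) (hm : ∀ e ∈ m, e * e = e) :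
    prodW α l * prodW α m = prodW α m * prodW α l :=
  prodW_comm_of α l _ (fun e he => (prodW_comm_iG α m hm (hl e he)).symm)

lemma elemP_comm_iA (e₀ : G) (l : List G) (he : e₀ * e₀ = e₀) (hl : ∀ e ∈ l, e * e = e) (a : A) :
    elemP α e₀ l * ιA α a = ιA α a * elemP α e₀ l := by
  rw [elemP_eq, mul_assoc, prodW_comm_iA α l hl, ← mul_assoc, T1 α he, mul_assoc]

lemma iG_mul_elemP (f e₀ : G) (l : List G) : ιG α f * elemP α e₀ l = elemP α (f * e₀) l := by
  rw [elemP_eq, elemP_eq, ← mul_assoc, iG_mul]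

lemma elemP_mul_iG (e₀ : G) (l : List G) (he : e₀ * e₀ = e₀) (hl : ∀ e ∈ l, e * e = e)
    {f : G} (hf : f * f = f) :
    elemP α e₀ l * ιG α f = elemP α (e₀ * f) l := by
  rw [elemP_eq, elemP_eq, mul_assoc, prodW_comm_iG α l hl hf, ← mul_assoc, iG_mul]

lemma star_one_sub_iG {e : G} (he : e * e = e) : star ((1 : F α) - ιG α e) = 1 - ιG α e := by
  rw [star_sub, star_one, star_iG, star_idem he]

lemma star_prodW (l : List G) (hl : ∀ e ∈ l, e * e = e) : star (prodW α l) = prodW α l := by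
  induction l with
  | nil => simp [prodW]
  | cons e l ih =>
      have he := hl e (List.mem_cons_self)
      have hl' : ∀ e ∈ l, e * e = e := fun e' he' => hl e' (List.mem_cons_of_mem e he')
      rw [prodW_cons, star_mul, ih hl', star_one_sub_iG α he]
      exact (prodW_comm_of α l _ (fun e' he' => by
        have hx := iG_comm α (hl' e' he') he
        rw [mul_sub, sub_mul, one_mul, mul_one, hx]))

lemma star_elemP (e₀ : G) (l : List G) (he : e₀ * e₀ = e₀) (hl : ∀ e ∈ l, e * e = e) :
    star (elemP α e₀ l) = elemP α e₀ l := by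
  rw [elemP_eq, star_mul, star_prodW α l hl, star_iG, star_idem he,
    prodW_comm_iG α l hl he]

/-- `e · g* = g* · (g e g*)` at the `ιG` level. -/
lemma iG_idem_mul_star (g : G) {e : G} (he : e * e = e) :
    ιG α e * ιG α (star g) = ιG α (star g) * ιG α (g * e * star g) := by
  rw [iG_mul, iG_mul]
  congr 1
  calc e * star g = e * (star g * g * star g) := by rw [sgs]
  _ = (e * (star g * g)) * star g := by noncomm_ring
  _ = ((star g * g) * e) * star g := by rw [idem_comm he (idem_ss g)]
  _ = star g * (g * e * star g) := by noncomm_ring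

lemma prodW_mul_iG_star (l : List G) (hl : ∀ e ∈ l, e * e = e) (g : G) :
    prodW α l * ιG α (star g) = ιG α (star g) * prodW α (l.map (fun e => g * e * star g)) := by
  induction l with
  | nil => simp [prodW]
  | cons e l ih =>
      have he := hl e (List.mem_cons_self)
      have hl' : ∀ e ∈ l, e * e = e := fun e' he' => hl e' (List.mem_cons_of_mem e he')
      rw [prodW_cons, List.map_cons, prodW_cons]
      calc (1 - ιG α e) * prodW α l * ιG α (star g)
          = (1 - ιG α e) * (ιG α (star g) * prodW α (List.map (fun e => g * e * star g) l)) := by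
            rw [mul_assoc, ih hl']
        _ = ((1 - ιG α e) * ιG α (star g)) * prodW α (List.map (fun e => g * e * star g) l) := by
            rw [mul_assoc]
        _ = (ιG α (star g) * (1 - ιG α (g * e * star g))) *
              prodW α (List.map (fun e => g * e * star g) l) := by
            rw [sub_mul, mul_sub, one_mul, mul_one, iG_idem_mul_star α g he]
        _ = ιG α (star g) * ((1 - ιG α (g * e * star g)) *
              prodW α (List.map (fun e => g * e * star g) l)) := by rw [mul_assoc]

lemma elemP_mul_iG_star (e₀ : G) (l : List G) (he : e₀ * e₀ = e₀) (hl : ∀ e ∈ l, e * e = e)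
    (g : G) :
    elemP α e₀ l * ιG α (star g) =
      ιG α (star g) * elemP α (g * e₀ * star g) (l.map (fun e => g * e * star g)) := by
  rw [elemP_eq, elemP_eq, mul_assoc, prodW_mul_iG_star α l hl g, ← mul_assoc,
    iG_idem_mul_star α g he, mul_assoc]

end ElemP

end Green

namespace Green

set_option linter.unusedSectionVars false
set_option maxHeartbeats 1000000

section Pi
variable {G : Type*} [InverseSemigroup G]
variable {A : Type*} [NonUnitalNormedRing A] [StarRing A] [CStarRing A] [NormedSpace ℂ A]
  [IsScalarTower ℂ A A] [SMulCommClass ℂ A A] [StarModule ℂ A] [CompleteSpace A]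

/-- star on `WithOne G` -/
def starW : WithOne G → WithOne G := WithOne.recOneCoe 1 (fun g => ((star g : G) : WithOne G))

@[simp] lemma starW_one : starW (1 : WithOne G) = 1 := rfl

@[simp] lemma starW_coe (g : G) : starW (g : WithOne G) = ((star g : G) : WithOne G) :=
  WithOne.recOneCoe_coe _ _ g

lemma starW_mul (v w : WithOne G) : starW (v * w) = starW w * starW v := by
  induction v using WithOne.recOneCoe with
  | one => simp
  | coe g =>
      induction w using WithOne.recOneCoe with
      | one => simp
      | coe h => rw [← WithOne.coe_mul, starW_coe, starW_coe, starW_coe, ← WithOne.coe_mul,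
          star_mul_rev]

/-- star-transport map on the monoid algebra `ℂ[G¹]`. -/
def starM : MonoidAlgebra ℂ (WithOne G) →+ MonoidAlgebra ℂ (WithOne G) :=
  (MonoidAlgebra.coeffAddEquiv.symm.toAddMonoidHom.comp
    ((Finsupp.mapDomain.addMonoidHom starW).comp
      (Finsupp.mapRange.addMonoidHom (starRingEnd ℂ).toAddMonoidHom))).comp
    MonoidAlgebra.coeffAddEquiv.toAddMonoidHom

lemma starM_single (w : WithOne G) (c : ℂ) :
    starM (MonoidAlgebra.single w c) = MonoidAlgebra.single (starW w) (starRingEnd ℂ c) := by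
  show MonoidAlgebra.ofCoeff (Finsupp.mapDomain starW (Finsupp.mapRange (starRingEnd ℂ) (map_zero _)
    (MonoidAlgebra.single w c).coeff)) = _
  simp only [MonoidAlgebra.single, Finsupp.mapRange_single, Finsupp.mapDomain_single,
    MonoidAlgebra.coeff_ofCoeff]

@[simp] lemma starM_one : starM (1 : MonoidAlgebra ℂ (WithOne G)) = 1 := by
  rw [MonoidAlgebra.one_def, starM_single]
  simp

lemma starM_smul (c : ℂ) (x : MonoidAlgebra ℂ (WithOne G)) :
    starM (c • x) = (starRingEnd ℂ c) • starM x := by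
  induction x using MonoidAlgebra.induction_linear with
  | zero => simp
  | add f g hf hg => rw [smul_add, map_add, hf, hg, map_add, smul_add]
  | single w d =>
      rw [MonoidAlgebra.smul_single, starM_single, starM_single, MonoidAlgebra.smul_single,
        smul_eq_mul, smul_eq_mul, map_mul]

lemma starM_mul (x y : MonoidAlgebra ℂ (WithOne G)) : starM (x * y) = starM y * starM x := by
  induction x using MonoidAlgebra.induction_linear with
  | zero => simp
  | add f f' hf hf' => simp [mul_add, add_mul, map_add, hf, hf']
  | single w c =>
      induction y using MonoidAlgebra.induction_linear with
      | zero => simp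
      | add g g' hg hg' => simp [mul_add, add_mul, map_add, hg, hg']
      | single v d =>
          rw [MonoidAlgebra.single_mul_single, starM_single, starM_single, starM_single,
            MonoidAlgebra.single_mul_single, starW_mul, map_mul, mul_comm]

variable (G A) in
/-- the letter map for the vanishing representation. -/
def fpi : (A ⊕ G) × Bool → MonoidAlgebra ℂ (WithOne G) := fun x =>
  match x with
  | (Sum.inl _, _) => 0
  | (Sum.inr g, false) => MonoidAlgebra.single (g : WithOne G) 1
  | (Sum.inr g, true) => MonoidAlgebra.single ((star g : G) : WithOne G) 1

variable (G A) in
/-- the vanishing representation on the free star algebra. -/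
def pi0 : FreeStar (A ⊕ G) →ₐ[ℂ] MonoidAlgebra ℂ (WithOne G) :=
  (MonoidAlgebra.lift ℂ (MonoidAlgebra ℂ (WithOne G)) (FreeMonoid ((A ⊕ G) × Bool)))
    (FreeMonoid.lift (fpi G A))

lemma pi0_single (w : FreeMonoid ((A ⊕ G) × Bool)) (c : ℂ) :
    pi0 G A (MonoidAlgebra.single w c) = c • (FreeMonoid.lift (fpi G A)) w :=
  MonoidAlgebra.lift_single _ _ _

lemma fpi_flip (x : (A ⊕ G) × Bool) : fpi G A (x.1, !x.2) = starM (fpi G A x) := by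
  rcases x with ⟨a | g, b⟩
  · cases b <;> simp [fpi]
  · cases b <;> simp [fpi, starM_single, sstar]

lemma flift_wordStar (w : FreeMonoid ((A ⊕ G) × Bool)) :
    (FreeMonoid.lift (fpi G A)) (FreeStar.wordStar w) = starM ((FreeMonoid.lift (fpi G A)) w) := by
  induction w using FreeMonoid.inductionOn' with
  | one =>
      have h0 : FreeStar.wordStar (1 : FreeMonoid ((A ⊕ G) × Bool)) = 1 := rfl
      rw [h0, map_one, starM_one]
  | of_mul x xs ih =>
      have h0 : FreeStar.wordStar (FreeMonoid.of x) = FreeMonoid.of (x.1, !x.2) := by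
        simp only [FreeStar.wordStar, FreeMonoid.toList_of, List.map_cons, List.map_nil,
          List.reverse_cons, List.reverse_nil, List.nil_append, FreeMonoid.ofList_singleton]
      rw [FreeStar.wordStar_mul, h0, map_mul, ih]
      rw [map_mul, starM_mul]
      congr 1
      rw [FreeMonoid.lift_eval_of, FreeMonoid.lift_eval_of, fpi_flip]

lemma star_eq_starAux (x : FreeStar (A ⊕ G)) : star x = FreeStar.starAux x := rfl

lemma pi0_star (x : FreeStar (A ⊕ G)) : pi0 G A (star x) = starM (pi0 G A x) := by
  rw [star_eq_starAux]
  induction x using MonoidAlgebra.induction_linear with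
  | zero => rw [map_zero, map_zero, map_zero]
  | add f g hf hg => rw [map_add, map_add, hf, hg, map_add, map_add]
  | single w c =>
      rw [FreeStar.starAux_single, pi0_single, pi0_single, flift_wordStar, starM_smul]

variable (α : G → A →⋆ₙₐ[ℂ] A)

lemma pi0_genA (a : A) : pi0 G A (genA (G := G) a) = 0 := by
  rw [genA, pi0_single, FreeMonoid.lift_eval_of]
  simp [fpi]

lemma pi0_genG (g : G) : pi0 G A (genG (A := A) g) = MonoidAlgebra.single (g : WithOne G) 1 := by
  rw [genG, pi0_single, FreeMonoid.lift_eval_of]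
  simp [fpi]

lemma pi0_rel : ∀ ⦃x y : FreeStar (A ⊕ G)⦄, Rel α x y → pi0 G A x = pi0 G A y := by
  intro x y h
  induction h with
  | add_A a b => rw [pi0_genA, map_add, pi0_genA, pi0_genA]; simp
  | smul_A c a => rw [pi0_genA, map_smul, pi0_genA]; simp
  | mul_A a b => rw [pi0_genA, map_mul, pi0_genA, pi0_genA]; simp
  | star_A a => rw [pi0_genA, pi0_star, pi0_genA]; simp
  | mul_G g h => rw [pi0_genG, map_mul, pi0_genG, pi0_genG, MonoidAlgebra.single_mul_single,
      ← WithOne.coe_mul, one_mul]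
  | star_G g => rw [pi0_genG, pi0_star, pi0_genG, starM_single, starW_coe]; simp
  | act g a => simp only [map_mul, pi0_genA, zero_mul, mul_zero]
  | comm g a => simp only [map_mul, pi0_genA, zero_mul, mul_zero]
  | star_cl h ih => rw [pi0_star, pi0_star, ih]

variable (G A) in
/-- the vanishing representation of `𝔽(G,A)` on `ℂ[G¹]`. -/
def piF : F α →ₐ[ℂ] MonoidAlgebra ℂ (WithOne G) :=
  RingQuot.liftAlgHom ℂ ⟨pi0 G A, pi0_rel α⟩

lemma piF_iA (a : A) : piF G A α (ιA α a) = 0 := by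
  rw [ιA, piF, RingQuot.liftAlgHom_mkAlgHom_apply, pi0_genA]

lemma piF_iG (g : G) : piF G A α (ιG α g) = MonoidAlgebra.single (g : WithOne G) 1 := by
  rw [ιG, piF, RingQuot.liftAlgHom_mkAlgHom_apply, pi0_genG]

end Pi

end Green

namespace Green

set_option linter.unusedSectionVars false
set_option maxHeartbeats 1000000

section Main
variable {G : Type*} [InverseSemigroup G]
variable {A : Type*} [NonUnitalNormedRing A] [StarRing A] [CStarRing A] [NormedSpace ℂ A]
  [IsScalarTower ℂ A A] [SMulCommClass ℂ A A] [StarModule ℂ A] [CompleteSpace A]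
variable (α : G → A →⋆ₙₐ[ℂ] A)

/-- extension of the action to `G¹`, with `1` acting as the identity. -/
def actW (w : WithOne G) : A → A := WithOne.recOneCoe id (fun g => ⇑(α g)) w

@[simp] lemma actW_one (a : A) : actW α (1 : WithOne G) a = a := rfl

@[simp] lemma actW_coe (g : G) (a : A) : actW α (g : WithOne G) a = α g a := by
  rw [actW, WithOne.recOneCoe_coe]

lemma actW_sub (w : WithOne G) (u v : A) : actW α w (u - v) = actW α w u - actW α w v := by
  induction w using WithOne.recOneCoe with
  | one => simp
  | coe g => simp [map_sub]

lemma actW_alpha (hα : IsGAlgebra α) (w : WithOne G) (e : G) (u : A) :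
    actW α w (α e u) = actW α (w * (e : WithOne G)) u := by
  induction w using WithOne.recOneCoe with
  | one => rw [one_mul]; simp
  | coe g =>
      rw [← WithOne.coe_mul, actW_coe, actW_coe, hα.map_mul]
      rfl

@[simp] lemma actL_nil (a : A) : actL α ([] : List G) a = a := rfl

lemma actL_cons (e : G) (l : List G) (a : A) :
    actL α (e :: l) a = actL α l a - α e (actL α l a) := rfl

variable (G) in
/-- the image of `prodW` in `ℂ[G¹]`. -/
def Wpi (l : List G) : MonoidAlgebra ℂ (WithOne G) :=
  (l.map (fun e => 1 - MonoidAlgebra.single (e : WithOne G) (1 : ℂ))).prod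

@[simp] lemma Wpi_nil : Wpi G ([] : List G) = 1 := rfl

lemma Wpi_cons (e : G) (l : List G) :
    Wpi G (e :: l) = (1 - MonoidAlgebra.single (e : WithOne G) (1 : ℂ)) * Wpi G l := by
  simp [Wpi]

lemma piF_prodW (l : List G) : piF G A α (prodW α l) = Wpi G l := by
  induction l with
  | nil => simp [prodW, Wpi]
  | cons e l ih =>
      rw [prodW_cons, map_mul, ih, Wpi_cons, map_sub, map_one, piF_iG]

lemma piF_elemP (e₀ : G) (l : List G) :
    piF G A α (elemP α e₀ l) = MonoidAlgebra.single (e₀ : WithOne G) (1 : ℂ) * Wpi G l := by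
  rw [elemP_eq, map_mul, piF_iG, piF_prodW]

/-- The central summation lemma: sandwiched coefficients of the form
`actW w (actL l d)` are computed by a linear functional evaluated on `ℂ[G¹]`. -/
lemma key_sum (hα : IsGAlgebra α) (u v : F α) (d : A) (l : List G) (w : WithOne G) :
    u * ιA α (actW α w (actL α l d)) * v
      = Finsupp.linearCombination ℂ (fun w' : WithOne G => u * ιA α (actW α w' d) * v)
          (MonoidAlgebra.single w (1 : ℂ) * Wpi G l).coeff := by
  induction l generalizing w with
  | nil =>
      rw [actL_nil, Wpi_nil, mul_one]
      rw [show (MonoidAlgebra.single w (1:ℂ)).coeff = Finsupp.single w (1:ℂ) from rfl,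
        Finsupp.linearCombination_single, one_smul]
  | cons e l ih =>
      rw [actL_cons, actW_sub, iA_sub, mul_sub, sub_mul, ih w, actW_alpha α hα,
        ih (w * (e : WithOne G)), ← map_sub]
      congr 1
      rw [← MonoidAlgebra.coeff_sub]
      congr 1
      rw [Wpi_cons, sub_mul, one_mul, mul_sub, ← mul_assoc, MonoidAlgebra.single_mul_single,
        mul_one]

end Main

end Green

namespace Green

set_option linter.unusedSectionVars false
set_option maxHeartbeats 1000000

section Red
variable {G : Type*} [InverseSemigroup G]
variable {A : Type*} [NonUnitalNormedRing A] [StarRing A] [CStarRing A] [NormedSpace ℂ A]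
  [IsScalarTower ℂ A A] [SMulCommClass ℂ A A] [StarModule ℂ A] [CompleteSpace A]
variable (α : G → A →⋆ₙₐ[ℂ] A)

lemma actL_star (l : List G) (a : A) : actL α l (star a) = star (actL α l a) := by
  induction l with
  | nil => simp
  | cons e l ih => rw [actL_cons, actL_cons, star_sub, ih, map_star]

lemma actP_star (e₀ : G) (l : List G) (a : A) :
    actP α e₀ l (star a) = star (actP α e₀ l a) := by
  rw [actP, actP, actL_star, map_star]

lemma actStar_star (g e₀ : G) (l : List G) (a : A) :
    actStar α g e₀ l (star a) = star (actStar α g e₀ l a) := by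
  rw [actStar, actStar, actP_star, map_star]

lemma prodW_sq (l : List G) (hl : ∀ e ∈ l, e * e = e) :
    prodW α l * prodW α l = prodW α l := by
  induction l with
  | nil => simp
  | cons e l ih =>
      have he := hl e (List.mem_cons_self)
      have hl' : ∀ e ∈ l, e * e = e := fun e' he' => hl e' (List.mem_cons_of_mem e he')
      have hsq : (1 - ιG α e) * (1 - ιG α e) = 1 - ιG α e := by
        rw [sub_mul, one_mul, mul_sub, mul_one, iG_idem α he]
        abel
      have hcomm : prodW α l * (1 - ιG α e) = (1 - ιG α e) * prodW α l := by
        rw [mul_sub, sub_mul, mul_one, one_mul, prodW_comm_iG α l hl' he]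
      rw [prodW_cons]
      calc (1 - ιG α e) * prodW α l * ((1 - ιG α e) * prodW α l)
          = (1 - ιG α e) * (prodW α l * (1 - ιG α e)) * prodW α l := by noncomm_ring
      _ = (1 - ιG α e) * ((1 - ιG α e) * prodW α l) * prodW α l := by rw [hcomm]
      _ = ((1 - ιG α e) * (1 - ιG α e)) * (prodW α l * prodW α l) := by noncomm_ring
      _ = (1 - ιG α e) * prodW α l := by rw [hsq, ih hl']

lemma elemP_sq (e₀ : G) (l : List G) (he : e₀ * e₀ = e₀) (hl : ∀ e ∈ l, e * e = e) :
    elemP α e₀ l * elemP α e₀ l = elemP α e₀ l := by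
  rw [elemP_eq]
  calc ιG α e₀ * prodW α l * (ιG α e₀ * prodW α l)
      = ιG α e₀ * (prodW α l * ιG α e₀) * prodW α l := by noncomm_ring
  _ = ιG α e₀ * (ιG α e₀ * prodW α l) * prodW α l := by rw [prodW_comm_iG α l hl he]
  _ = (ιG α e₀ * ιG α e₀) * (prodW α l * prodW α l) := by noncomm_ring
  _ = ιG α e₀ * prodW α l := by rw [iG_idem α he, prodW_sq α l hl]

lemma elemP_comm_iG (e₀ : G) (l : List G) (he : e₀ * e₀ = e₀) (hl : ∀ e ∈ l, e * e = e)
    {f : G} (hf : f * f = f) :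
    elemP α e₀ l * ιG α f = ιG α f * elemP α e₀ l := by
  rw [elemP_eq, mul_assoc, prodW_comm_iG α l hl hf, ← mul_assoc, iG_comm α he hf, mul_assoc]

lemma elemP_comm_elemP (e₀ : G) (l : List G) (he : e₀ * e₀ = e₀) (hl : ∀ e ∈ l, e * e = e)
    (f₀ : G) (m : List G) (hf : f₀ * f₀ = f₀) (hm : ∀ e ∈ m, e * e = e) :
    elemP α e₀ l * elemP α f₀ m = elemP α f₀ m * elemP α e₀ l := by
  rw [elemP_eq α f₀ m]
  calc elemP α e₀ l * (ιG α f₀ * prodW α m)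
      = (elemP α e₀ l * ιG α f₀) * prodW α m := by rw [mul_assoc]
  _ = ιG α f₀ * (elemP α e₀ l * prodW α m) := by rw [elemP_comm_iG α e₀ l he hl hf, mul_assoc]
  _ = ιG α f₀ * (prodW α m * elemP α e₀ l) := by
      congr 1
      calc elemP α e₀ l * prodW α m = ιG α e₀ * (prodW α l * prodW α m) := by
            rw [elemP_eq, mul_assoc]
      _ = ιG α e₀ * (prodW α m * prodW α l) := by rw [prodW_comm_prodW α l m hl hm]
      _ = (ιG α e₀ * prodW α m) * prodW α l := by rw [mul_assoc]
      _ = (prodW α m * ιG α e₀) * prodW α l := by rw [prodW_comm_iG α m hm he]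
      _ = prodW α m * elemP α e₀ l := by rw [mul_assoc, ← elemP_eq]
  _ = ιG α f₀ * prodW α m * elemP α e₀ l := by rw [mul_assoc]

/-- `star (elemGE g e₀ l) = elemP e₀ l * ιG (star g)`. -/
lemma star_elemGE (g e₀ : G) (l : List G) (he : e₀ * e₀ = e₀) (hl : ∀ e ∈ l, e * e = e) :
    star (elemGE α g e₀ l) = elemP α e₀ l * ιG α (star g) := by
  rw [elemGE, star_mul, star_iG, star_elemP α e₀ l he hl]

/-- `elemGE * ιA (actStar d) = ιA (actP conj-data d) * elemGE`. -/
lemma right_red (g e₀ : G) (l : List G) (he : e₀ * e₀ = e₀) (hl : ∀ e ∈ l, e * e = e) (d : A) :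
    elemGE α g e₀ l * ιA α (actStar α g e₀ l d) =
      ιA α (actP α (g * e₀ * star g) (l.map fun e => g * e * star g) d) * elemGE α g e₀ l := by
  set vh := actP α (g * e₀ * star g) (l.map fun e => g * e * star g) d with hvh
  have hact : actStar α g e₀ l d = α (star g) vh := rfl
  have hsc := starcov α (star g) vh
  rw [sstar] at hsc
  calc elemGE α g e₀ l * ιA α (actStar α g e₀ l d)
      = ιG α g * (elemP α e₀ l * ιA α (α (star g) vh)) := by rw [elemGE, hact, mul_assoc]
  _ = ιG α g * (ιA α (α (star g) vh) * elemP α e₀ l) := by rw [elemP_comm_iA α e₀ l he hl]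
  _ = (ιG α g * ιA α (α (star g) vh)) * elemP α e₀ l := by rw [mul_assoc]
  _ = (ιG α (g * star g) * ιA α vh * ιG α g) * elemP α e₀ l := by rw [hsc]
  _ = (ιA α vh * ιG α (g * star g) * ιG α g) * elemP α e₀ l := by
      rw [T1 α (idem_gs g) vh]
  _ = ιA α vh * elemGE α g e₀ l := by
      rw [elemGE]
      calc ιA α vh * ιG α (g * star g) * ιG α g * elemP α e₀ l
          = ιA α vh * ((ιG α (g * star g) * ιG α g) * elemP α e₀ l) := by noncomm_ring
      _ = ιA α vh * (ιG α (g * star g * g) * elemP α e₀ l) := by rw [iG_mul]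
      _ = ιA α vh * (ιG α g * elemP α e₀ l) := by rw [gsg]

/-- `ιA (actStar d) * star elemGE = star elemGE * ιA (actP conj-data d)`. -/
lemma left_red (g e₀ : G) (l : List G) (he : e₀ * e₀ = e₀) (hl : ∀ e ∈ l, e * e = e) (d : A) :
    ιA α (actStar α g e₀ l d) * star (elemGE α g e₀ l) =
      star (elemGE α g e₀ l) *
        ιA α (actP α (g * e₀ * star g) (l.map fun e => g * e * star g) d) := by
  have h := congrArg star (right_red α g e₀ l he hl (star d))
  rw [star_mul, star_mul, star_iA, star_iA, actStar_star, actP_star] at h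
  simp only [star_star] at h
  exact h

/-- `elemGE * star elemGE = elemP (conj data)`. -/
lemma xxs_eq (g e₀ : G) (l : List G) (he : e₀ * e₀ = e₀) (hl : ∀ e ∈ l, e * e = e) :
    elemGE α g e₀ l * star (elemGE α g e₀ l) =
      elemP α (g * e₀ * star g) (l.map fun e => g * e * star g) := by
  rw [star_elemGE α g e₀ l he hl, elemGE]
  calc ιG α g * elemP α e₀ l * (elemP α e₀ l * ιG α (star g))
      = ιG α g * (elemP α e₀ l * elemP α e₀ l) * ιG α (star g) := by noncomm_ring
  _ = ιG α g * (elemP α e₀ l * ιG α (star g)) := by rw [elemP_sq α e₀ l he hl, mul_assoc]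
  _ = ιG α g * (ιG α (star g) * elemP α (g * e₀ * star g) (l.map fun e => g * e * star g)) := by
      rw [elemP_mul_iG_star α e₀ l he hl g]
  _ = ιG α (g * star g) * elemP α (g * e₀ * star g) (l.map fun e => g * e * star g) := by
      rw [← mul_assoc, iG_mul]
  _ = elemP α ((g * star g) * (g * e₀ * star g)) (l.map fun e => g * e * star g) := by
      rw [iG_mul_elemP]
  _ = elemP α (g * e₀ * star g) (l.map fun e => g * e * star g) := by
      have h1 : (g * star g) * (g * e₀ * star g) = (g * star g * g) * (e₀ * star g) := by
        noncomm_ring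
      have h2 : (g * star g * g) * (e₀ * star g) = g * e₀ * star g := by
        rw [gsg]
        noncomm_ring
      rw [h1, h2]

/-- `x * x* * x = x` for `x = elemGE`. -/
lemma xxsx_eq (g e₀ : G) (l : List G) (he : e₀ * e₀ = e₀) (hl : ∀ e ∈ l, e * e = e) :
    elemGE α g e₀ l * star (elemGE α g e₀ l) * elemGE α g e₀ l = elemGE α g e₀ l := by
  rw [star_elemGE α g e₀ l he hl, elemGE]
  calc ιG α g * elemP α e₀ l * (elemP α e₀ l * ιG α (star g)) * (ιG α g * elemP α e₀ l)
      = ιG α g * (elemP α e₀ l * elemP α e₀ l) * (ιG α (star g) * ιG α g) * elemP α e₀ l := by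
        noncomm_ring
  _ = ιG α g * elemP α e₀ l * ιG α (star g * g) * elemP α e₀ l := by
      rw [elemP_sq α e₀ l he hl, iG_mul]
  _ = ιG α g * (elemP α e₀ l * ιG α (star g * g)) * elemP α e₀ l := by noncomm_ring
  _ = ιG α g * (ιG α (star g * g) * elemP α e₀ l) * elemP α e₀ l := by
      rw [elemP_comm_iG α e₀ l he hl (idem_ss g)]
  _ = (ιG α g * ιG α (star g * g)) * (elemP α e₀ l * elemP α e₀ l) := by noncomm_ring
  _ = ιG α g * elemP α e₀ l := by
      rw [iG_mul, elemP_sq α e₀ l he hl, ← mul_assoc, gsg]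

end Red

end Green

namespace Green

set_option linter.unusedSectionVars false
set_option maxHeartbeats 1000000

section Atoms
variable {G : Type*} [InverseSemigroup G]
variable {A : Type*} [NonUnitalNormedRing A] [StarRing A] [CStarRing A] [NormedSpace ℂ A]
  [IsScalarTower ℂ A A] [SMulCommClass ℂ A A] [StarModule ℂ A] [CompleteSpace A]
variable (α : G → A →⋆ₙₐ[ℂ] A) (S : Set G)

/-- An element of `EH` is a self-adjoint idempotent (via its S-data). -/
lemma EH_star {p : F α} (hp : p ∈ EH α S) : star p = p := by
  obtain ⟨e₀, l, ⟨-, he⟩, hl, rfl⟩ := hp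
  exact star_elemP α e₀ l he (fun e he => (hl e he).2)

lemma EH_sq {p : F α} (hp : p ∈ EH α S) : p * p = p := by
  obtain ⟨e₀, l, ⟨-, he⟩, hl, rfl⟩ := hp
  exact elemP_sq α e₀ l he (fun e he => (hl e he).2)

/-- `x ∈ G_H` implies `x* x ∈ H⁽⁰⁾`. -/
lemma GH_star_mul_self {x : F α} (hx : x ∈ GH α S) : star x * x ∈ H0 α S := by
  obtain ⟨hne, g, e, heH0, rfl, habs⟩ := hx
  have heEH := heH0.1
  have hstar : star (ιG α g * e) = e * ιG α (star g) := by
    rw [star_mul, star_iG, EH_star α S heEH]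
  have : star (ιG α g * e) * (ιG α g * e) = e := by
    rw [hstar]
    calc e * ιG α (star g) * (ιG α g * e) = e * (ιG α (star g) * ιG α g) * e := by noncomm_ring
    _ = e * ιG α (star g * g) * e := by rw [iG_mul]
    _ = e * e := by rw [habs]
    _ = e := EH_sq α S heEH
  rw [this]
  exact heH0

/-- Core consequences of membership in `Hgpd`. -/
lemma hgpd_core (hS : IsSubInvSemigroup S) {z : F α} (hz : z ∈ Hgpd α S) :
    z * star z ∈ EH α S ∧ z * star z ≠ 0 ∧ z * star z * z = z ∧
      ∃ s ∈ S, star z = ιG α s * (z * star z) := by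
  obtain ⟨hzne, t, htS, f, hfH0, rfl⟩ := hz
  obtain ⟨f₀, fl, ⟨hf₀S, hf₀⟩, hflSe, hfeq⟩ := hfH0.1
  subst hfeq
  have hfl : ∀ e ∈ fl, e * e = e := fun e he => (hflSe e he).2
  have hstarf : star (elemP α f₀ fl) = elemP α f₀ fl := star_elemP α f₀ fl hf₀ hfl
  have hfsq : elemP α f₀ fl * elemP α f₀ fl = elemP α f₀ fl := elemP_sq α f₀ fl hf₀ hfl
  set z := ιG α t * elemP α f₀ fl with hzdef
  have hstarz : star z = elemP α f₀ fl * ιG α (star t) := by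
    rw [hzdef, star_mul, star_iG, hstarf]
  -- z z* = elemP (t f₀ t*) (fl.map conj)
  have hzz : z * star z =
      elemP α (t * f₀ * star t) (fl.map fun e => t * e * star t) := by
    rw [hstarz, hzdef]
    calc ιG α t * elemP α f₀ fl * (elemP α f₀ fl * ιG α (star t))
        = ιG α t * (elemP α f₀ fl * elemP α f₀ fl) * ιG α (star t) := by noncomm_ring
    _ = ιG α t * (elemP α f₀ fl * ιG α (star t)) := by rw [hfsq, mul_assoc]
    _ = ιG α t * (ιG α (star t) *
          elemP α (t * f₀ * star t) (fl.map fun e => t * e * star t)) := by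
        rw [elemP_mul_iG_star α f₀ fl hf₀ hfl t]
    _ = ιG α (t * star t) * elemP α (t * f₀ * star t) (fl.map fun e => t * e * star t) := by
        rw [← mul_assoc, iG_mul]
    _ = elemP α ((t * star t) * (t * f₀ * star t)) (fl.map fun e => t * e * star t) := by
        rw [iG_mul_elemP]
    _ = elemP α (t * f₀ * star t) (fl.map fun e => t * e * star t) := by
        have h1 : (t * star t) * (t * f₀ * star t) = (t * star t * t) * (f₀ * star t) := by
          noncomm_ring
        have h2 : (t * star t * t) * (f₀ * star t) = t * f₀ * star t := by
          rw [gsg]; noncomm_ring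
        rw [h1, h2]
  have hzzEH : z * star z ∈ EH α S := by
    rw [hzz]
    refine ⟨t * f₀ * star t, fl.map fun e => t * e * star t,
      ⟨hS.mul_mem (hS.mul_mem htS hf₀S) (hS.star_mem htS), idem_conj hf₀ t⟩, ?_, rfl⟩
    intro e' he'
    obtain ⟨e, he, rfl⟩ := List.mem_map.1 he'
    exact ⟨hS.mul_mem (hS.mul_mem htS (hflSe e he).1) (hS.star_mem htS),
      idem_conj (hfl e he) t⟩
  -- z z* z = z
  have hzzz : z * star z * z = z := by
    rw [hstarz, hzdef]
    calc ιG α t * elemP α f₀ fl * (elemP α f₀ fl * ιG α (star t)) * (ιG α t * elemP α f₀ fl)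
        = ιG α t * (elemP α f₀ fl * elemP α f₀ fl) * (ιG α (star t) * ιG α t) *
            elemP α f₀ fl := by noncomm_ring
    _ = ιG α t * (elemP α f₀ fl * ιG α (star t * t)) * elemP α f₀ fl := by
        rw [hfsq, iG_mul, mul_assoc (ιG α t)]
    _ = ιG α t * (ιG α (star t * t) * elemP α f₀ fl) * elemP α f₀ fl := by
        rw [elemP_comm_iG α f₀ fl hf₀ hfl (idem_ss t)]
    _ = (ιG α t * ιG α (star t * t)) * (elemP α f₀ fl * elemP α f₀ fl) := by noncomm_ring
    _ = ιG α (t * (star t * t)) * elemP α f₀ fl := by rw [iG_mul, hfsq]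
    _ = ιG α t * elemP α f₀ fl := by
        have : t * (star t * t) = t := by rw [← mul_assoc, gsg]
        rw [this]
  have hzzne : z * star z ≠ 0 := by
    intro h
    exact hzne (by rw [← hzzz, h, zero_mul])
  refine ⟨hzzEH, hzzne, hzzz, star t, hS.star_mem htS, ?_⟩
  rw [hzz, hstarz, elemP_mul_iG_star α f₀ fl hf₀ hfl t]

end Atoms

end Green

namespace Green

set_option linter.unusedSectionVars false
set_option maxHeartbeats 1000000

section Final
variable {G : Type*} [InverseSemigroup G]
variable {A : Type*} [NonUnitalNormedRing A] [StarRing A] [CStarRing A] [NormedSpace ℂ A]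
  [IsScalarTower ℂ A A] [SMulCommClass ℂ A A] [StarModule ℂ A] [CompleteSpace A]
variable (α : G → A →⋆ₙₐ[ℂ] A) (S : Set G)

/-- If `x* y ∈ H` then `x* y (x* y)* = x* x` (atoms coincide). -/
lemma zz_eq_xx (hS : IsSubInvSemigroup S)
    (g1 e1 : G) (l1 : List G) (h1e : e1 * e1 = e1) (h1l : ∀ e ∈ l1, e * e = e)
    (h1GH : elemGE α g1 e1 l1 ∈ GH α S) (g2 e2 : G) (l2 : List G)
    (hP : star (elemGE α g1 e1 l1) * elemGE α g2 e2 l2 ∈ Hgpd α S) :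
    (star (elemGE α g1 e1 l1) * elemGE α g2 e2 l2) *
        star (star (elemGE α g1 e1 l1) * elemGE α g2 e2 l2) =
      star (elemGE α g1 e1 l1) * elemGE α g1 e1 l1 := by
  set X := elemGE α g1 e1 l1 with hX
  set Y := elemGE α g2 e2 l2 with hY
  have hstz : star (star X * Y) = star Y * X := by rw [star_mul, star_star]
  obtain ⟨hEH, hne, -, -⟩ := hgpd_core α S hS hP
  have hmin := GH_star_mul_self α S h1GH
  refine hmin.2.2 _ hEH hne ?_
  rw [hstz]
  calc ((star X * Y) * (star Y * X)) * (star X * X)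
      = star X * (Y * (star Y * (X * star X * X))) := by noncomm_ring
  _ = star X * (Y * (star Y * X)) := by rw [hX, xxsx_eq α g1 e1 l1 h1e h1l]
  _ = (star X * Y) * (star Y * X) := by noncomm_ring

/-- `x* y ∈ H → y* x ∈ H`. -/
lemma hgpd_star_dir (hS : IsSubInvSemigroup S)
    (g1 e1 : G) (l1 : List G) (h1e : e1 * e1 = e1) (h1l : ∀ e ∈ l1, e * e = e)
    (h1GH : elemGE α g1 e1 l1 ∈ GH α S) (g2 e2 : G) (l2 : List G)
    (hP : star (elemGE α g1 e1 l1) * elemGE α g2 e2 l2 ∈ Hgpd α S) :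
    star (elemGE α g2 e2 l2) * elemGE α g1 e1 l1 ∈ Hgpd α S := by
  set X := elemGE α g1 e1 l1 with hX
  set Y := elemGE α g2 e2 l2 with hY
  have hstz : star (star X * Y) = star Y * X := by rw [star_mul, star_star]
  obtain ⟨-, -, -, s, hsS, hstareq⟩ := hgpd_core α S hS hP
  have hzz := zz_eq_xx α S hS g1 e1 l1 h1e h1l h1GH g2 e2 l2 hP
  rw [hzz] at hstareq
  rw [hstz] at hstareq
  have hne : star Y * X ≠ 0 := by
    intro h
    apply hP.1
    have : star (star X * Y) = 0 := by rw [hstz, h]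
    rw [← star_star (star X * Y), this, star_zero]
  exact ⟨hne, s, hsS, star X * X, GH_star_mul_self α S h1GH, hstareq⟩

/-- Under `x* y ∈ H`, the range atoms agree: `x x* = y y*`. -/
lemma range_atoms_eq (hS : IsSubInvSemigroup S)
    (g1 e1 : G) (l1 : List G) (h1e : e1 * e1 = e1) (h1l : ∀ e ∈ l1, e * e = e)
    (h1GH : elemGE α g1 e1 l1 ∈ GH α S)
    (g2 e2 : G) (l2 : List G) (h2e : e2 * e2 = e2) (h2l : ∀ e ∈ l2, e * e = e)
    (h2GH : elemGE α g2 e2 l2 ∈ GH α S)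
    (hP : star (elemGE α g1 e1 l1) * elemGE α g2 e2 l2 ∈ Hgpd α S) :
    elemGE α g1 e1 l1 * star (elemGE α g1 e1 l1) =
      elemGE α g2 e2 l2 * star (elemGE α g2 e2 l2) := by
  set X := elemGE α g1 e1 l1 with hX
  set Y := elemGE α g2 e2 l2 with hY
  have hstz : star (star X * Y) = star Y * X := by rw [star_mul, star_star]
  have hzzXX : (star X * Y) * (star Y * X) = star X * X := by
    have h := zz_eq_xx α S hS g1 e1 l1 h1e h1l h1GH g2 e2 l2 hP
    rw [hstz] at h
    exact h
  have hQ : star Y * X ∈ Hgpd α S :=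
    hgpd_star_dir α S hS g1 e1 l1 h1e h1l h1GH g2 e2 l2 hP
  have hstz2 : star (star Y * X) = star X * Y := by rw [star_mul, star_star]
  have hzzYY : (star Y * X) * (star X * Y) = star Y * Y := by
    have h := zz_eq_xx α S hS g2 e2 l2 h2e h2l h2GH g1 e1 l1 hQ
    rw [hstz2] at h
    exact h
  -- A := X X*, B := Y Y*
  have hconj1 : ∀ e ∈ l1.map (fun e => g1 * e * star g1), e * e = e := by
    intro e' he'
    obtain ⟨e, he, rfl⟩ := List.mem_map.1 he'
    exact idem_conj (h1l e he) g1
  have hconj2 : ∀ e ∈ l2.map (fun e => g2 * e * star g2), e * e = e := by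
    intro e' he'
    obtain ⟨e, he, rfl⟩ := List.mem_map.1 he'
    exact idem_conj (h2l e he) g2
  have hAsq : (X * star X) * (X * star X) = X * star X := by
    rw [hX, xxs_eq α g1 e1 l1 h1e h1l]
    exact elemP_sq α _ _ (idem_conj h1e g1) hconj1
  have hBsq : (Y * star Y) * (Y * star Y) = Y * star Y := by
    rw [hY, xxs_eq α g2 e2 l2 h2e h2l]
    exact elemP_sq α _ _ (idem_conj h2e g2) hconj2
  have hcomm : (X * star X) * (Y * star Y) = (Y * star Y) * (X * star X) := by
    rw [hX, hY, xxs_eq α g1 e1 l1 h1e h1l, xxs_eq α g2 e2 l2 h2e h2l]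
    exact elemP_comm_elemP α _ _ (idem_conj h1e g1) hconj1 _ _ (idem_conj h2e g2) hconj2
  have hABA : (X * star X) * (Y * star Y) * (X * star X) = X * star X := by
    calc (X * star X) * (Y * star Y) * (X * star X)
        = X * ((star X * Y) * (star Y * X)) * star X := by noncomm_ring
    _ = X * (star X * X) * star X := by rw [hzzXX]
    _ = (X * star X * X) * star X := by noncomm_ring
    _ = X * star X := by rw [hX, xxsx_eq α g1 e1 l1 h1e h1l]
  have hBAB : (Y * star Y) * (X * star X) * (Y * star Y) = Y * star Y := by
    calc (Y * star Y) * (X * star X) * (Y * star Y)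
        = Y * ((star Y * X) * (star X * Y)) * star Y := by noncomm_ring
    _ = Y * (star Y * Y) * star Y := by rw [hzzYY]
    _ = (Y * star Y * Y) * star Y := by noncomm_ring
    _ = Y * star Y := by rw [hY, xxsx_eq α g2 e2 l2 h2e h2l]
  have hA_AB : X * star X = (X * star X) * (Y * star Y) := by
    calc X * star X = (X * star X) * (Y * star Y) * (X * star X) := hABA.symm
    _ = (X * star X) * ((Y * star Y) * (X * star X)) := by noncomm_ring
    _ = (X * star X) * ((X * star X) * (Y * star Y)) := by rw [← hcomm]
    _ = ((X * star X) * (X * star X)) * (Y * star Y) := by noncomm_ring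
    _ = (X * star X) * (Y * star Y) := by rw [hAsq]
  have hB_AB : Y * star Y = (X * star X) * (Y * star Y) := by
    calc Y * star Y = (Y * star Y) * (X * star X) * (Y * star Y) := hBAB.symm
    _ = ((Y * star Y) * ((X * star X) * (Y * star Y))) := by noncomm_ring
    _ = ((Y * star Y) * ((Y * star Y) * (X * star X))) := by rw [← hcomm]
    _ = ((Y * star Y) * (Y * star Y)) * (X * star X) := by noncomm_ring
    _ = (Y * star Y) * (X * star X) := by rw [hBsq]
    _ = (X * star X) * (Y * star Y) := by rw [hcomm]
  rw [hA_AB, ← hB_AB]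

/-- The main covariance identity, given equality of range atoms. -/
lemma main_eq (hα : IsGAlgebra α)
    (g1 e1 : G) (l1 : List G) (h1e : e1 * e1 = e1) (h1l : ∀ e ∈ l1, e * e = e)
    (g2 e2 : G) (l2 : List G) (h2e : e2 * e2 = e2) (h2l : ∀ e ∈ l2, e * e = e)
    (hAB : elemGE α g1 e1 l1 * star (elemGE α g1 e1 l1) =
      elemGE α g2 e2 l2 * star (elemGE α g2 e2 l2)) (d : A) :
    ιA α (actStar α g1 e1 l1 d) * (star (elemGE α g1 e1 l1) * elemGE α g2 e2 l2)
      = (star (elemGE α g1 e1 l1) * elemGE α g2 e2 l2) * ιA α (actStar α g2 e2 l2 d) := by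
  set X := elemGE α g1 e1 l1 with hX
  set Y := elemGE α g2 e2 l2 with hY
  have hl : ιA α (actStar α g1 e1 l1 d) * (star X * Y) =
      star X * ιA α (actP α (g1 * e1 * star g1) (l1.map fun e => g1 * e * star g1) d) * Y := by
    rw [← mul_assoc, hX, left_red α g1 e1 l1 h1e h1l d]
  have hr : (star X * Y) * ιA α (actStar α g2 e2 l2 d) =
      star X * ιA α (actP α (g2 * e2 * star g2) (l2.map fun e => g2 * e * star g2) d) * Y := by
    rw [mul_assoc, hY, right_red α g2 e2 l2 h2e h2l d, ← mul_assoc]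
  rw [hl, hr]
  have hb1 : actP α (g1 * e1 * star g1) (l1.map fun e => g1 * e * star g1) d =
      actW α ((g1 * e1 * star g1 : G) : WithOne G)
        (actL α (l1.map fun e => g1 * e * star g1) d) := by
    rw [actW_coe]
    rfl
  have hb2 : actP α (g2 * e2 * star g2) (l2.map fun e => g2 * e * star g2) d =
      actW α ((g2 * e2 * star g2 : G) : WithOne G)
        (actL α (l2.map fun e => g2 * e * star g2) d) := by
    rw [actW_coe]
    rfl
  rw [hb1, hb2, key_sum α hα (star X) Y d _ _, key_sum α hα (star X) Y d _ _]
  congr 1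
  have hpi1 : MonoidAlgebra.single ((g1 * e1 * star g1 : G) : WithOne G) (1 : ℂ) *
      Wpi G (l1.map fun e => g1 * e * star g1) =
      piF G A α (elemP α (g1 * e1 * star g1) (l1.map fun e => g1 * e * star g1)) :=
    (piF_elemP α _ _).symm
  have hpi2 : MonoidAlgebra.single ((g2 * e2 * star g2 : G) : WithOne G) (1 : ℂ) *
      Wpi G (l2.map fun e => g2 * e * star g2) =
      piF G A α (elemP α (g2 * e2 * star g2) (l2.map fun e => g2 * e * star g2)) :=
    (piF_elemP α _ _).symm
  rw [hpi1, hpi2, ← xxs_eq α g1 e1 l1 h1e h1l, ← xxs_eq α g2 e2 l2 h2e h2l, ← hX, ← hY, hAB]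

end Final

end Green

namespace Green

lemma ind_true {P : Prop} (h : P) : ind P = 1 := by
  unfold ind
  exact if_pos h

lemma ind_false {P : Prop} (h : ¬ P) : ind P = 0 := by
  unfold ind
  exact if_neg h

end Green

namespace Green

/-- The identity `⟨x,y⟩_{B₀}* = ⟨y,x⟩_{B₀}` on standard elements
`x = a⋊g`, `y = b⋊h`:  for all `a, b ∈ A` and `g, h ∈ G_H` (given by representations),
`([g* h ∈ H] · α_{g*}(a*·b) · (g* h))* = [h* g ∈ H] · α_{h*}(b*·a) · (h* g)`
holds in `𝔽(G,A)`. -/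
theorem B0_inner_product_star
    {G : Type*} [InverseSemigroup G]
    {A : Type*} [NonUnitalNormedRing A] [StarRing A] [CStarRing A] [NormedSpace ℂ A]
    [IsScalarTower ℂ A A] [SMulCommClass ℂ A A] [StarModule ℂ A] [CompleteSpace A]
    (α : G → A →⋆ₙₐ[ℂ] A) (hα : IsGAlgebra α)
    (S : Set G) (hS : IsSubInvSemigroup S) (hSfin : S.Finite)
    (gg ge₀ : G) (gl : List G) (hge : ge₀ * ge₀ = ge₀) (hgl : ∀ e ∈ gl, e * e = e)
    (hgH0 : elemP α ge₀ gl ∈ H0 α S) (hgGH : elemGE α gg ge₀ gl ∈ GH α S)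
    (hg he₀ : G) (lh : List G) (hhe : he₀ * he₀ = he₀) (hlh : ∀ e ∈ lh, e * e = e)
    (hhH0 : elemP α he₀ lh ∈ H0 α S) (hhGH : elemGE α hg he₀ lh ∈ GH α S)
    (a b : A) :
    star (ind (star (elemGE α gg ge₀ gl) * elemGE α hg he₀ lh ∈ Hgpd α S) •
      (ιA α (actStar α gg ge₀ gl (star a * b)) *
        (star (elemGE α gg ge₀ gl) * elemGE α hg he₀ lh)))
    = ind (star (elemGE α hg he₀ lh) * elemGE α gg ge₀ gl ∈ Hgpd α S) •
      (ιA α (actStar α hg he₀ lh (star b * a)) *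
        (star (elemGE α hg he₀ lh) * elemGE α gg ge₀ gl)) := by
  by_cases hP : star (elemGE α gg ge₀ gl) * elemGE α hg he₀ lh ∈ Hgpd α S
  · have hQ : star (elemGE α hg he₀ lh) * elemGE α gg ge₀ gl ∈ Hgpd α S :=
      hgpd_star_dir α S hS gg ge₀ gl hge hgl hgGH hg he₀ lh hP
    rw [ind_true hP, ind_true hQ, one_smul, one_smul]
    have hsz : star (star (elemGE α gg ge₀ gl) * elemGE α hg he₀ lh) =
        star (elemGE α hg he₀ lh) * elemGE α gg ge₀ gl := by
      rw [star_mul, star_star]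
    have hc : star (star a * b) = star b * a := by rw [star_mul, star_star]
    have hAB := range_atoms_eq α S hS gg ge₀ gl hge hgl hgGH hg he₀ lh hhe hlh hhGH hP
    have hmain := main_eq α hα gg ge₀ gl hge hgl hg he₀ lh hhe hlh hAB (star a * b)
    calc star (ιA α (actStar α gg ge₀ gl (star a * b)) *
          (star (elemGE α gg ge₀ gl) * elemGE α hg he₀ lh))
        = star ((star (elemGE α gg ge₀ gl) * elemGE α hg he₀ lh) *
            ιA α (actStar α hg he₀ lh (star a * b))) := by rw [hmain]
      _ = ιA α (actStar α hg he₀ lh (star b * a)) *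
            (star (elemGE α hg he₀ lh) * elemGE α gg ge₀ gl) := by
          rw [star_mul, hsz, star_iA, ← actStar_star α hg he₀ lh, hc]
  · have hQ : ¬ (star (elemGE α hg he₀ lh) * elemGE α gg ge₀ gl ∈ Hgpd α S) := by
      intro h
      exact hP (hgpd_star_dir α S hS hg he₀ lh hhe hlh hhGH gg ge₀ gl h)
    rw [ind_false hP, ind_false hQ, zero_smul, zero_smul, star_zero]

end Green
end
end
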